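/- If an arrangement (ι,κ) is globally adequate, then no doctor d has interview capacity κ_d with 1 < κ_d < min{|D|,|H|}, and no hospital h has interview capacity ι_h with 1 < ι_h < min{|D|,|H|}. -/

import Mathlib

/- Formal model of the two-step interview-then-match process of
Echenique-et-al-style markets: Step 1 computes the interview matching by
hospital-proposing deferred acceptance (with responsive, capacity-constrained
choice functions); Step 2 computes the final one-to-one matching by
doctor-proposing deferred acceptance on preferences restricted to interview
partners. -/

open Finset

section Model

variable {D H : Type*} [Fintype D] [Fintype H] [DecidableEq D] [DecidableEq H]

/-- The (at most) `n` best elements of `s` according to `rank` (lower rank = better). -/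
def topN {α : Type*} [DecidableEq α] (rank : α → ℕ) (n : ℕ) (s : Finset α) : Finset α :=
  s.filter fun x => (s.filter fun y => rank y < rank x).card < n

/-- A market: strict preferences represented by rank functions
(lower rank = more preferred) together with acceptability predicates. -/
structure Market (D H : Type*) where
  rankDH : D → H → ℕ
  accD : D → H → Bool
  rankHD : H → D → ℕ
  accH : H → D → Bool

/-- Strict preferences: rank functions are injective. -/
def Market.Strict (M : Market D H) : Prop :=
  (∀ d, Function.Injective (M.rankDH d)) ∧ (∀ h, Function.Injective (M.rankHD h))

/-- Hospital `h` proposes to its `ι h` best acceptable doctors that have not rejected it. -/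
def hProps (M : Market D H) (ι : H → ℕ) (R : Finset (H × D)) (h : H) : Finset D :=
  topN (M.rankHD h) (ι h) (univ.filter fun d => M.accH h d ∧ (h, d) ∉ R)

/-- Doctor `d` keeps her `κ d` best acceptable proposals. -/
def dKeeps (M : Market D H) (ι : H → ℕ) (κ : D → ℕ) (R : Finset (H × D)) (d : D) :
    Finset H :=
  topN (fun h => M.rankDH d h) (κ d) (univ.filter fun h => M.accD d h ∧ d ∈ hProps M ι R h)

/-- One round of hospital-proposing deferred acceptance: the (cumulative) rejection set
grows by the proposals not kept. -/
def iStep (M : Market D H) (ι : H → ℕ) (κ : D → ℕ) (R : Finset (H × D)) :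
    Finset (H × D) :=
  R ∪ univ.filter fun p : H × D => p.2 ∈ hProps M ι R p.1 ∧ p.1 ∉ dKeeps M ι κ R p.2

/-- Rejection set at the end of hospital-proposing DA (interview step). -/
def iRej (M : Market D H) (ι : H → ℕ) (κ : D → ℕ) : Finset (H × D) :=
  (iStep M ι κ)^[Fintype.card D * Fintype.card H] ∅

/-- The interview matching (the hospital-optimal stable many-to-many matching) computed
by hospital-proposing deferred acceptance: pairs `(h, d)` such that `h` interviews `d`. -/
def interviews (M : Market D H) (ι : H → ℕ) (κ : D → ℕ) : Finset (H × D) :=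
  univ.filter fun p : H × D =>
    p.2 ∈ hProps M ι (iRej M ι κ) p.1 ∧ p.1 ∈ dKeeps M ι κ (iRej M ι κ) p.2

/-- Doctor `d` proposes to her best interview partner that has not rejected her. -/
def dProps (M : Market D H) (V : Finset (H × D)) (S : Finset (D × H)) (d : D) :
    Finset H :=
  topN (M.rankDH d) 1 (univ.filter fun h => (h, d) ∈ V ∧ (d, h) ∉ S)

/-- Hospital `h` keeps its best proposal. -/
def hKeeps (M : Market D H) (V : Finset (H × D)) (S : Finset (D × H)) (h : H) :
    Finset D :=
  topN (M.rankHD h) 1 (univ.filter fun d => h ∈ dProps M V S d)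

/-- One round of doctor-proposing DA on preferences restricted to the interview matching `V`. -/
def mStep (M : Market D H) (V : Finset (H × D)) (S : Finset (D × H)) : Finset (D × H) :=
  S ∪ univ.filter fun p : D × H => p.2 ∈ dProps M V S p.1 ∧ p.1 ∉ hKeeps M V S p.2

/-- Rejection set at the end of the doctor-proposing DA of the matching step. -/
def mRej (M : Market D H) (V : Finset (H × D)) : Finset (D × H) :=
  (mStep M V)^[Fintype.card D * Fintype.card H] ∅

/-- The final matching: doctor-proposing DA on preferences restricted to interviews `V`. -/
def finalMatch (M : Market D H) (V : Finset (H × D)) : Finset (D × H) :=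
  univ.filter fun p : D × H =>
    p.2 ∈ dProps M V (mRej M V) p.1 ∧ p.1 ∈ hKeeps M V (mRej M V) p.2

/-- The `(ι,κ)`-matching: the culmination of the two-step process. -/
def ikMatching (M : Market D H) (ι : H → ℕ) (κ : D → ℕ) : Finset (D × H) :=
  finalMatch M (interviews M ι κ)

/-- `(d, h)` is a blocking pair of `μ` (w.r.t. the true, unrestricted preferences). -/
def Blocks (M : Market D H) (μ : Finset (D × H)) (d : D) (h : H) : Prop :=
  M.accD d h ∧ M.accH h d ∧ (d, h) ∉ μ ∧
    (∀ h', (d, h') ∈ μ → M.rankDH d h < M.rankDH d h') ∧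
    (∀ d', (d', h) ∈ μ → M.rankHD h d < M.rankHD h d')

instance (M : Market D H) (μ : Finset (D × H)) (d : D) (h : H) :
    Decidable (Blocks M μ d h) := by
  unfold Blocks; infer_instance

/-- A matching is stable if it admits no blocking pair. -/
def Stable (M : Market D H) (μ : Finset (D × H)) : Prop := ∀ d h, ¬ Blocks M μ d h

/-- `(ι,κ)` is adequate at `M` if the `(ι,κ)`-matching is stable. -/
def Adequate (M : Market D H) (ι : H → ℕ) (κ : D → ℕ) : Prop :=
  Stable M (ikMatching M ι κ)

/-- One-to-one matching (as a set of pairs). -/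
def IsMatching (μ : Finset (D × H)) : Prop :=
  (∀ d h h', (d, h) ∈ μ → (d, h') ∈ μ → h = h') ∧
    (∀ d d' h, (d, h) ∈ μ → (d', h) ∈ μ → d = d')

/-- Common preferences: all doctors rank the hospitals identically, all hospitals rank
the doctors identically, everyone is mutually acceptable (and preferences are strict). -/
def CommonPrefs (M : Market D H) : Prop :=
  M.Strict ∧ (∀ d d', M.rankDH d = M.rankDH d') ∧ (∀ h h', M.rankHD h = M.rankHD h') ∧
    ∀ d h, M.accD d h ∧ M.accH h d

/-- Number of hospitals matched under `μ`. -/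
def matchedHospitals (μ : Finset (D × H)) : ℕ :=
  (univ.filter fun h : H => ∃ d, (d, h) ∈ μ).card

/-- Number of blocking pairs of `μ`. -/
def blockingCount (M : Market D H) (μ : Finset (D × H)) : ℕ :=
  (univ.filter fun p : D × H => Blocks M μ p.1 p.2).card

end Model

/-- `(ι,κ)` is globally adequate: adequate at every (strict) preference profile. -/
def GloballyAdequate (D H : Type*) [Fintype D] [Fintype H] [DecidableEq D] [DecidableEq H]
    (ι : H → ℕ) (κ : D → ℕ) : Prop :=
  ∀ M : Market D H, M.Strict → Adequate M ι κ

variable {D H : Type*} [Fintype D] [Fintype H] [DecidableEq D] [DecidableEq H]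

section Helpers
variable {α : Type*} [DecidableEq α] {rank : α → ℕ} {n : ℕ} {s : Finset α} {x : α}

lemma mem_topN : x ∈ topN rank n s ↔ x ∈ s ∧ (s.filter fun y => rank y < rank x).card < n := by
  simp [topN]

lemma topN_empty : topN rank n (∅ : Finset α) = ∅ := by simp [topN]

lemma topN_zero : topN rank 0 s = ∅ := by simp [topN]

lemma topN_of_card_le (h : s.card ≤ n) : topN rank n s = s := by
  ext y
  rw [mem_topN]
  refine ⟨fun h => h.1, fun hy => ⟨hy, ?_⟩⟩
  have hsub : (s.filter fun z => rank z < rank y) ⊆ s.erase y := by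
    intro z hz
    rw [mem_filter] at hz
    exact mem_erase.2 ⟨fun hzy => by simp [hzy] at hz, hz.1⟩
  have h1 : (s.filter fun z => rank z < rank y).card ≤ s.card - 1 := by
    have := card_le_card hsub
    rwa [card_erase_of_mem hy] at this
  have h2 : 1 ≤ s.card := card_pos.2 ⟨y, hy⟩
  omega

lemma topN_one_eq_singleton (hx : x ∈ s) (hmin : ∀ y ∈ s, y ≠ x → rank x < rank y) :
    topN rank 1 s = {x} := by
  ext y
  rw [mem_topN, mem_singleton]
  constructor
  · rintro ⟨hy, hcard⟩
    by_contra hne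
    have : x ∈ s.filter fun z => rank z < rank y := mem_filter.2 ⟨hx, hmin y hy hne⟩
    have := card_pos.2 ⟨x, this⟩
    omega
  · rintro rfl
    refine ⟨hx, ?_⟩
    have : (s.filter fun z => rank z < rank y) = ∅ := by
      rw [filter_eq_empty_iff]
      intro z hz hlt
      rcases eq_or_ne z y with rfl | hne
      · omega
      · exact absurd hlt (by have := hmin z hz hne; omega)
    simp [this]

lemma iterate_eq_of_chain {X : Type*} (f : X → X) (g : ℕ → X) (k N : ℕ)
    (h1 : ∀ i, i < k → f (g i) = g (i + 1)) (h2 : f (g k) = g k) (hN : k ≤ N) :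
    f^[N] (g 0) = g k := by
  have key : ∀ i, i ≤ k → f^[i] (g 0) = g i := by
    intro i
    induction i with
    | zero => simp
    | succ i ih =>
      intro h
      rw [Function.iterate_succ_apply', ih (by omega), h1 i (by omega)]
  obtain ⟨m, rfl⟩ := Nat.exists_eq_add_of_le hN
  rw [Nat.add_comm, Function.iterate_add_apply, key k le_rfl, Function.iterate_fixed h2]

lemma iterate_eq_of_fix {X : Type*} (f : X → X) (a b : X) (N : ℕ)
    (h1 : f a = b) (h2 : f b = b) (hN : 1 ≤ N) : f^[N] a = b := by
  have := iterate_eq_of_chain f (fun i => if i = 0 then a else b) 1 N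
    (by intro i hi; simp [Nat.lt_one_iff.1 hi, h1]) (by simp [h2]) hN
  simpa using this

lemma card_filter_fin_lt {t : ℕ} (v : ℕ) (hv : v ≤ t) :
    ((univ : Finset (Fin t)).filter fun x : Fin t => (x : ℕ) < v).card = v := by
  induction v with
  | zero => simp
  | succ v ih =>
    have hv' : v ≤ t := by omega
    have : ((univ : Finset (Fin t)).filter fun x : Fin t => (x : ℕ) < v + 1)
        = insert ⟨v, by omega⟩ ((univ : Finset (Fin t)).filter fun x : Fin t => (x : ℕ) < v) := by
      ext x
      simp only [mem_filter, mem_insert, mem_univ, true_and]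
      constructor
      · intro h
        rcases Nat.lt_or_ge (x : ℕ) v with h' | h'
        · exact Or.inr h'
        · have hxv : (x : ℕ) = v := by omega
          exact Or.inl (Fin.ext (by simp [hxv]))
      · rintro (rfl | h)
        · simp
        · omega
    rw [this, card_insert_of_notMem (by simp), ih hv']
end Helpers

section Helpers2
open Function
variable {α : Type*} [DecidableEq α]

/-- Rank function putting the family `f` first (in index order), everyone else after. -/
noncomputable def mkRank {t : ℕ} (f : Fin t → α) (enc : α → ℕ) : α → ℕ := fun a =>
  if h : ∃ j, f j = a then (h.choose : ℕ) else t + enc a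

lemma mkRank_apply {t : ℕ} {f : Fin t → α} (hf : Function.Injective f) (enc : α → ℕ)
    (j : Fin t) : mkRank f enc (f j) = j := by
  unfold mkRank
  rw [dif_pos ⟨j, rfl⟩]
  exact congrArg _ (hf (⟨j, rfl⟩ : ∃ i, f i = f j).choose_spec)

lemma mkRank_injective {t : ℕ} {f : Fin t → α} {enc : α → ℕ}
    (hf : Function.Injective f) (henc : Function.Injective enc) :
    Function.Injective (mkRank f enc) := by
  intro a b hab
  unfold mkRank at hab
  split_ifs at hab with h1 h2 h2
  · rw [← h1.choose_spec, ← h2.choose_spec]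
    exact congrArg f (Fin.ext (by exact_mod_cast hab))
  · exact absurd hab (by have := (h1.choose_spec); have : (h1.choose : ℕ) < t := h1.choose.isLt; omega)
  · exact absurd hab (by have : (h2.choose : ℕ) < t := h2.choose.isLt; omega)
  · have : enc a = enc b := by omega
    exact henc this

lemma topN_image_univ {t n : ℕ} (f : Fin t → α) (hf : Function.Injective f)
    (rank : α → ℕ) (hr : ∀ i, rank (f i) = i) :
    topN rank n ((univ : Finset (Fin t)).image f) =
      ((univ : Finset (Fin t)).filter fun i : Fin t => (i : ℕ) < n).image f := by
  ext x
  simp only [mem_topN, Finset.mem_image, Finset.mem_filter, Finset.mem_univ, true_and]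
  constructor
  · rintro ⟨⟨i, rfl⟩, hcard⟩
    refine ⟨i, ?_, rfl⟩
    have key : ((univ.image f).filter fun y => rank y < rank (f i))
        = (univ.filter fun i' : Fin t => (i' : ℕ) < (i : ℕ)).image f := by
      rw [Finset.filter_image]
      congr 1
      ext i'
      simp [hr]
    rw [key, Finset.card_image_of_injective _ hf, card_filter_fin_lt _ (le_of_lt i.isLt)] at hcard
    exact hcard
  · rintro ⟨i, hi, rfl⟩
    refine ⟨⟨i, rfl⟩, ?_⟩
    have key : ((univ.image f).filter fun y => rank y < rank (f i))
        = (univ.filter fun i' : Fin t => (i' : ℕ) < (i : ℕ)).image f := by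
      rw [Finset.filter_image]
      congr 1
      ext i'
      simp [hr]
    rw [key, Finset.card_image_of_injective _ hf, card_filter_fin_lt _ (le_of_lt i.isLt)]
    exact hi
end Helpers2
section Rank2
variable {α : Type*} [DecidableEq α]

/-- Rank function putting `a` first, `b` second, everyone else after. -/
def rank2 (a b : α) (enc : α → ℕ) : α → ℕ := fun x =>
  if x = a then 0 else if x = b then 1 else 2 + enc x

lemma rank2_injective {a b : α} {enc : α → ℕ} (hab : a ≠ b)
    (henc : Function.Injective enc) : Function.Injective (rank2 a b enc) := by
  intro x y hxy
  unfold rank2 at hxy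
  split_ifs at hxy with h1 h2 h3 h4 h5 h6 h7 <;> first
    | (subst_vars; rfl)
    | omega
    | (exact absurd rfl hab)
    | (subst_vars; exact absurd rfl hab)
    | (exact henc (by omega))

lemma rank2_a {a b : α} (enc : α → ℕ) : rank2 a b enc a = 0 := by simp [rank2]

lemma rank2_b {a b : α} (enc : α → ℕ) (hab : b ≠ a) : rank2 a b enc b = 1 := by
  simp [rank2, hab]
end Rank2
section Markets
variable {D H : Type*} [Fintype D] [Fintype H] [DecidableEq D] [DecidableEq H]

noncomputable def encN (α : Type*) [Fintype α] : α → ℕ := fun a => ((Fintype.equivFin α) a : ℕ)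

lemma encN_injective (α : Type*) [Fintype α] : Function.Injective (encN α) :=
  fun _ _ h => (Fintype.equivFin α).injective (Fin.ext h)

lemma finalMatch_of_empty (M : Market D H) : finalMatch M (∅ : Finset (H × D)) = ∅ := by
  have hd : ∀ S d, dProps M (∅ : Finset (H × D)) S d = ∅ := by
    intro S d
    unfold dProps
    have : (univ.filter fun h : H => (h, d) ∈ (∅ : Finset (H × D)) ∧ (d, h) ∉ S) = ∅ := by
      simp
    rw [this, topN_empty]
  unfold finalMatch
  rw [Finset.filter_eq_empty_iff]
  intro p _
  rw [hd]
  simp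

/-- The market where only the pair (d0, h0) is mutually acceptable. -/
noncomputable def M0 (d0 : D) (h0 : H) : Market D H where
  rankDH := fun _ => encN H
  accD := fun d h => decide (d = d0 ∧ h = h0)
  rankHD := fun _ => encN D
  accH := fun h d => decide (h = h0 ∧ d = d0)

lemma M0_strict (d0 : D) (h0 : H) : (M0 d0 h0).Strict :=
  ⟨fun _ => encN_injective H, fun _ => encN_injective D⟩

lemma M0_not_adequate (ι : H → ℕ) (κ : D → ℕ) (d0 : D) (h0 : H)
    (hz : ι h0 = 0 ∨ κ d0 = 0) : ¬ Adequate (M0 d0 h0) ι κ := by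
  set M := M0 d0 h0 with hM
  have hV : interviews M ι κ = ∅ := by
    unfold interviews
    rw [Finset.filter_eq_empty_iff]
    intro p _
    rcases hz with hz | hz
    · -- all hProps are empty
      rintro ⟨h1, -⟩
      revert h1
      unfold hProps
      rcases eq_or_ne p.1 h0 with rfl | hne
      · rw [hz, topN_zero]; simp
      · have : (univ.filter fun d : D => M.accH p.1 d ∧ (p.1, d) ∉ iRej M ι κ) = ∅ := by
          rw [Finset.filter_eq_empty_iff]
          intro d _
          simp [hM, M0, hne]
        rw [this, topN_empty]; simp
    · -- all dKeeps are empty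
      rintro ⟨-, h2⟩
      revert h2
      unfold dKeeps
      rcases eq_or_ne p.2 d0 with rfl | hne
      · rw [hz, topN_zero]; simp
      · have : (univ.filter fun h : H => M.accD p.2 h ∧ p.2 ∈ hProps M ι (iRej M ι κ) h) = ∅ := by
          rw [Finset.filter_eq_empty_iff]
          intro h _
          simp [hM, M0, hne]
        rw [this, topN_empty]; simp
  intro had
  have hfin : ikMatching M ι κ = ∅ := by
    unfold ikMatching
    rw [hV, finalMatch_of_empty]
  have hblk : Blocks M (ikMatching M ι κ) d0 h0 := by
    rw [hfin]
    refine ⟨by simp [hM, M0], by simp [hM, M0], by simp, ?_, ?_⟩ <;> intro x hx <;> simp at hx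
  exact had d0 h0 hblk
end Markets
section MarketB
variable {D H : Type*} [Fintype D] [Fintype H] [DecidableEq D] [DecidableEq H]

/-- Market for case B: doctor `d0` with capacity ≥ 2, two capacity-1 hospitals `u, v`. -/
noncomputable def MB (d0 e : D) (u v : H) : Market D H where
  rankDH := fun d => if d = d0 then rank2 v u (encN H) else encN H
  accD := fun d h => decide ((d = d0 ∧ (h = u ∨ h = v)) ∨ (d = e ∧ h = u))
  rankHD := fun h => if h = u then rank2 d0 e (encN D) else encN D
  accH := fun h d => decide ((h = u ∧ (d = d0 ∨ d = e)) ∨ (h = v ∧ d = d0))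

lemma MB_strict (d0 e : D) (u v : H) (hde : e ≠ d0) (huv : u ≠ v) :
    (MB d0 e u v).Strict := by
  constructor
  · intro d
    rcases eq_or_ne d d0 with rfl | hd
    · have hr : (MB d e u v).rankDH d = rank2 v u (encN H) := by simp [MB]
      rw [hr]; exact rank2_injective (Ne.symm huv) (encN_injective H)
    · have hr : (MB d0 e u v).rankDH d = encN H := by simp [MB, hd]
      rw [hr]; exact encN_injective H
  · intro h
    rcases eq_or_ne h u with rfl | hh
    · have hr : (MB d0 e h v).rankHD h = rank2 d0 e (encN D) := by simp [MB]
      rw [hr]; exact rank2_injective (Ne.symm hde) (encN_injective D)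
    · have hr : (MB d0 e u v).rankHD h = encN D := by simp [MB, hh]
      rw [hr]; exact encN_injective D

lemma MB_not_adequate (ι : H → ℕ) (κ : D → ℕ) (d0 e : D) (u v : H)
    (hde : e ≠ d0) (huv : u ≠ v) (hκ : 2 ≤ κ d0) (hu : ι u = 1) (hv : 1 ≤ ι v) :
    ¬ Adequate (MB d0 e u v) ι κ := by
  set M := MB d0 e u v with hM
  have haccH : ∀ h d, (M.accH h d : Prop) ↔ ((h = u ∧ (d = d0 ∨ d = e)) ∨ (h = v ∧ d = d0)) := by
    intro h d; simp [hM, MB]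
  have haccD : ∀ d h, (M.accD d h : Prop) ↔ ((d = d0 ∧ (h = u ∨ h = v)) ∨ (d = e ∧ h = u)) := by
    intro d h; simp [hM, MB]
  have hrd0 : M.rankDH d0 = rank2 v u (encN H) := by simp [hM, MB]
  have hru : M.rankHD u = rank2 d0 e (encN D) := by simp [hM, MB]
  -- hProps at R = ∅
  have hPu : hProps M ι ∅ u = {d0} := by
    unfold hProps
    have hbase : (univ.filter fun d : D => M.accH u d ∧ (u, d) ∉ (∅ : Finset (H × D))) = {d0, e} := by
      ext d; simp [haccH, huv]
    rw [hbase, hu, hru]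
    refine topN_one_eq_singleton (by simp) ?_
    intro y hy hne
    simp only [Finset.mem_insert, Finset.mem_singleton] at hy
    rcases hy with rfl | rfl
    · exact absurd rfl hne
    · rw [rank2_a, rank2_b _ hde]; omega
  have hPv : hProps M ι ∅ v = {d0} := by
    unfold hProps
    have hbase : (univ.filter fun d : D => M.accH v d ∧ (v, d) ∉ (∅ : Finset (H × D))) = {d0} := by
      ext d; simp [haccH, Ne.symm huv]
    rw [hbase]
    exact topN_of_card_le (by simpa using hv)
  have hPo : ∀ h, h ≠ u → h ≠ v → hProps M ι ∅ h = ∅ := by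
    intro h h1 h2
    unfold hProps
    have hbase : (univ.filter fun d : D => M.accH h d ∧ (h, d) ∉ (∅ : Finset (H × D))) = ∅ := by
      rw [Finset.filter_eq_empty_iff]
      intro d _
      simp [haccH, h1, h2]
    rw [hbase, topN_empty]
  -- dKeeps at R = ∅
  have hKd0 : dKeeps M ι κ ∅ d0 = {u, v} := by
    unfold dKeeps
    have hbase : (univ.filter fun h : H => M.accD d0 h ∧ d0 ∈ hProps M ι ∅ h) = {u, v} := by
      ext h
      simp only [Finset.mem_filter, Finset.mem_univ, true_and, Finset.mem_insert,
        Finset.mem_singleton]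
      constructor
      · rintro ⟨hacc, -⟩
        rw [haccD] at hacc
        rcases hacc with ⟨-, hd⟩ | ⟨hed, -⟩
        · exact hd
        · exact absurd hed.symm hde
      · rintro (rfl | rfl)
        · exact ⟨by rw [haccD]; tauto, by rw [hPu]; simp⟩
        · exact ⟨by rw [haccD]; tauto, by rw [hPv]; simp⟩
    rw [hbase]
    exact topN_of_card_le (le_trans ((Finset.card_insert_le _ _).trans (by simp)) hκ)
  -- the interview DA is already at a fixed point
  have hfix : iStep M ι κ ∅ = ∅ := by
    unfold iStep
    have hflt : (univ.filter fun p : H × D =>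
        p.2 ∈ hProps M ι ∅ p.1 ∧ p.1 ∉ dKeeps M ι κ ∅ p.2) = ∅ := by
      rw [Finset.filter_eq_empty_iff]
      rintro ⟨h, d⟩ _
      rintro ⟨hmem, hnk⟩
      rcases eq_or_ne h u with rfl | h1
      · rw [hPu] at hmem; simp only [Finset.mem_singleton] at hmem; subst hmem
        rw [hKd0] at hnk; simp at hnk
      rcases eq_or_ne h v with rfl | h2
      · rw [hPv] at hmem; simp only [Finset.mem_singleton] at hmem; subst hmem
        rw [hKd0] at hnk; simp at hnk
      · rw [hPo h h1 h2] at hmem; simp at hmem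
    rw [hflt]; simp
  have hiRej : iRej M ι κ = ∅ := Function.iterate_fixed hfix _
  have hV : interviews M ι κ = ({(u, d0), (v, d0)} : Finset (H × D)) := by
    unfold interviews
    rw [hiRej]
    ext ⟨h, d⟩
    simp only [Finset.mem_filter, Finset.mem_univ, true_and, Finset.mem_insert,
      Finset.mem_singleton, Prod.mk.injEq]
    constructor
    · rintro ⟨hmem, -⟩
      rcases eq_or_ne h u with rfl | h1
      · rw [hPu] at hmem; simp only [Finset.mem_singleton] at hmem; exact Or.inl ⟨rfl, hmem⟩
      rcases eq_or_ne h v with rfl | h2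
      · rw [hPv] at hmem; simp only [Finset.mem_singleton] at hmem; exact Or.inr ⟨rfl, hmem⟩
      · rw [hPo h h1 h2] at hmem; simp at hmem
    · rintro (⟨rfl, rfl⟩ | ⟨rfl, rfl⟩)
      · exact ⟨by rw [hPu]; simp, by rw [hKd0]; simp⟩
      · exact ⟨by rw [hPv]; simp, by rw [hKd0]; simp⟩
  set V : Finset (H × D) := {(u, d0), (v, d0)} with hVdef
  -- step 2
  have hdP0 : dProps M V ∅ d0 = {v} := by
    unfold dProps
    have hbase : (univ.filter fun h : H => (h, d0) ∈ V ∧ (d0, h) ∉ (∅ : Finset (D × H))) = {u, v} := by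
      ext h
      simp only [hVdef, Finset.mem_filter, Finset.mem_univ, true_and, Finset.notMem_empty,
        not_false_iff, and_true, Finset.mem_insert, Finset.mem_singleton, Prod.mk.injEq]
    rw [hbase, hrd0]
    refine topN_one_eq_singleton (by simp) ?_
    intro y hy hne
    simp only [Finset.mem_insert, Finset.mem_singleton] at hy
    rcases hy with rfl | rfl
    · rw [rank2_a, rank2_b _ huv]; omega
    · exact absurd rfl hne
  have hdPo : ∀ d, d ≠ d0 → dProps M V ∅ d = ∅ := by
    intro d hd
    unfold dProps
    have hbase : (univ.filter fun h : H => (h, d) ∈ V ∧ (d, h) ∉ (∅ : Finset (D × H))) = ∅ := by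
      rw [Finset.filter_eq_empty_iff]
      intro h _
      rintro ⟨hmem, -⟩
      simp only [hVdef, Finset.mem_insert, Finset.mem_singleton, Prod.mk.injEq] at hmem
      rcases hmem with ⟨-, h2⟩ | ⟨-, h2⟩ <;> exact hd h2
    rw [hbase, topN_empty]
  have hhKv : hKeeps M V ∅ v = {d0} := by
    unfold hKeeps
    have hbase : (univ.filter fun d : D => v ∈ dProps M V ∅ d) = {d0} := by
      ext d
      simp only [Finset.mem_filter, Finset.mem_univ, true_and, Finset.mem_singleton]
      constructor
      · intro hmem
        by_contra hd
        rw [hdPo d hd] at hmem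
        simp at hmem
      · rintro rfl
        rw [hdP0]
        exact Finset.mem_singleton_self v
    rw [hbase]
    exact topN_of_card_le (by simp)
  have hmfix : mStep M V ∅ = ∅ := by
    unfold mStep
    have hflt : (univ.filter fun p : D × H =>
        p.2 ∈ dProps M V ∅ p.1 ∧ p.1 ∉ hKeeps M V ∅ p.2) = ∅ := by
      rw [Finset.filter_eq_empty_iff]
      rintro ⟨d, h⟩ _
      rintro ⟨hmem, hnk⟩
      rcases eq_or_ne d d0 with rfl | hd
      · rw [hdP0] at hmem; simp only [Finset.mem_singleton] at hmem; subst hmem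
        rw [hhKv] at hnk; simp at hnk
      · rw [hdPo d hd] at hmem; simp at hmem
    rw [hflt]; simp
  have hmRej : mRej M V = ∅ := Function.iterate_fixed hmfix _
  have hfin : ikMatching M ι κ = ({(d0, v)} : Finset (D × H)) := by
    unfold ikMatching finalMatch
    rw [hV, hmRej]
    ext ⟨d, h⟩
    simp only [Finset.mem_filter, Finset.mem_univ, true_and, Finset.mem_singleton, Prod.mk.injEq]
    constructor
    · rintro ⟨hmem, -⟩
      rcases eq_or_ne d d0 with rfl | hd
      · rw [hdP0] at hmem; simp only [Finset.mem_singleton] at hmem; exact ⟨rfl, hmem⟩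
      · rw [hdPo d hd] at hmem; simp at hmem
    · rintro ⟨rfl, rfl⟩
      exact ⟨by rw [hdP0]; simp, by rw [hhKv]; simp⟩
  intro had
  refine had e u ?_
  rw [hfin]
  refine ⟨by rw [haccD]; tauto, by rw [haccH]; tauto, by simp [hde], ?_, ?_⟩
  · intro h' hh'
    simp only [Finset.mem_singleton, Prod.mk.injEq] at hh'
    exact absurd hh'.1 hde
  · intro d' hd'
    simp only [Finset.mem_singleton, Prod.mk.injEq] at hd'
    exact absurd hd'.2 huv
end MarketB
section MarketBP
variable {D H : Type*} [Fintype D] [Fintype H] [DecidableEq D] [DecidableEq H]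

/-- Market for case B′: hospital `h0` with capacity ≥ 2, two capacity-1 doctors `u, v`. -/
noncomputable def MBP (h0 e' : H) (u v : D) : Market D H where
  rankDH := fun d => if d = u then rank2 h0 e' (encN H) else encN H
  accD := fun d h => decide ((d = u ∧ (h = h0 ∨ h = e')) ∨ (d = v ∧ h = h0))
  rankHD := fun h => if h = h0 then rank2 v u (encN D) else encN D
  accH := fun h d => decide ((h = h0 ∧ (d = u ∨ d = v)) ∨ (h = e' ∧ d = u))

lemma MBP_strict (h0 e' : H) (u v : D) (he : e' ≠ h0) (huv : u ≠ v) :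
    (MBP h0 e' u v).Strict := by
  constructor
  · intro d
    rcases eq_or_ne d u with rfl | hd
    · have hr : (MBP h0 e' d v).rankDH d = rank2 h0 e' (encN H) := by simp [MBP]
      rw [hr]; exact rank2_injective (Ne.symm he) (encN_injective H)
    · have hr : (MBP h0 e' u v).rankDH d = encN H := by simp [MBP, hd]
      rw [hr]; exact encN_injective H
  · intro h
    rcases eq_or_ne h h0 with rfl | hh
    · have hr : (MBP h e' u v).rankHD h = rank2 v u (encN D) := by simp [MBP]
      rw [hr]; exact rank2_injective (Ne.symm huv) (encN_injective D)
    · have hr : (MBP h0 e' u v).rankHD h = encN D := by simp [MBP, hh]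
      rw [hr]; exact encN_injective D

lemma MBP_not_adequate (ι : H → ℕ) (κ : D → ℕ) (h0 e' : H) (u v : D)
    (he : e' ≠ h0) (huv : u ≠ v) (hι : 2 ≤ ι h0) (hu : κ u = 1) (hv : 1 ≤ κ v)
    (he1 : 1 ≤ ι e') :
    ¬ Adequate (MBP h0 e' u v) ι κ := by
  set M := MBP h0 e' u v with hM
  have haccH : ∀ h d, (M.accH h d : Prop) ↔ ((h = h0 ∧ (d = u ∨ d = v)) ∨ (h = e' ∧ d = u)) := by
    intro h d; simp [hM, MBP]
  have haccD : ∀ d h, (M.accD d h : Prop) ↔ ((d = u ∧ (h = h0 ∨ h = e')) ∨ (d = v ∧ h = h0)) := by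
    intro d h; simp [hM, MBP]
  have hru : M.rankDH u = rank2 h0 e' (encN H) := by simp [hM, MBP]
  have hrh0 : M.rankHD h0 = rank2 v u (encN D) := by simp [hM, MBP]
  set R1 : Finset (H × D) := {(e', u)} with hR1
  -- hProps at ∅ and R1 agree except for e'
  have hPh0 : ∀ R : Finset (H × D), (∀ d, (h0, d) ∉ R) → hProps M ι R h0 = {u, v} := by
    intro R hR
    unfold hProps
    have hbase : (univ.filter fun d : D => M.accH h0 d ∧ (h0, d) ∉ R) = {u, v} := by
      ext d; simp [haccH, Ne.symm he, hR d]
    rw [hbase]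
    exact topN_of_card_le (le_trans ((Finset.card_insert_le _ _).trans (by simp)) hι)
  have hPe0 : hProps M ι ∅ e' = {u} := by
    unfold hProps
    have hbase : (univ.filter fun d : D => M.accH e' d ∧ (e', d) ∉ (∅ : Finset (H × D))) = {u} := by
      ext d; simp [haccH, he]
    rw [hbase]
    exact topN_of_card_le (by simpa using he1)
  have hPe1 : hProps M ι R1 e' = ∅ := by
    unfold hProps
    have hbase : (univ.filter fun d : D => M.accH e' d ∧ (e', d) ∉ R1) = ∅ := by
      rw [Finset.filter_eq_empty_iff]
      intro d _
      rintro ⟨hacc, hnr⟩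
      rw [haccH] at hacc
      rcases hacc with ⟨hh, -⟩ | ⟨-, rfl⟩
      · exact he hh
      · exact hnr (by simp [hR1])
    rw [hbase, topN_empty]
  have hPo : ∀ (R : Finset (H × D)) h, h ≠ h0 → h ≠ e' → hProps M ι R h = ∅ := by
    intro R h h1 h2
    unfold hProps
    have hbase : (univ.filter fun d : D => M.accH h d ∧ (h, d) ∉ R) = ∅ := by
      rw [Finset.filter_eq_empty_iff]
      intro d _
      simp [haccH, h1, h2]
    rw [hbase, topN_empty]
  -- dKeeps
  have hKu0 : dKeeps M ι κ ∅ u = {h0} := by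
    unfold dKeeps
    have hbase : (univ.filter fun h : H => M.accD u h ∧ u ∈ hProps M ι ∅ h) = {h0, e'} := by
      ext h
      simp only [Finset.mem_filter, Finset.mem_univ, true_and, Finset.mem_insert,
        Finset.mem_singleton]
      constructor
      · rintro ⟨hacc, -⟩
        rw [haccD] at hacc
        rcases hacc with ⟨-, hd⟩ | ⟨huv', -⟩
        · exact hd
        · exact absurd huv' huv
      · rintro (rfl | rfl)
        · exact ⟨by rw [haccD]; tauto, by rw [hPh0 ∅ (by simp)]; simp⟩
        · exact ⟨by rw [haccD]; tauto, by rw [hPe0]; simp⟩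
    rw [hbase, hu, hru]
    refine topN_one_eq_singleton (by simp) ?_
    intro y hy hne
    simp only [Finset.mem_insert, Finset.mem_singleton] at hy
    rcases hy with rfl | rfl
    · exact absurd rfl hne
    · rw [rank2_a, rank2_b _ he]; omega
  have hKu1 : dKeeps M ι κ R1 u = {h0} := by
    unfold dKeeps
    have hbase : (univ.filter fun h : H => M.accD u h ∧ u ∈ hProps M ι R1 h) = {h0} := by
      ext h
      simp only [Finset.mem_filter, Finset.mem_univ, true_and, Finset.mem_singleton]
      constructor
      · rintro ⟨hacc, hmem⟩
        rw [haccD] at hacc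
        rcases hacc with ⟨-, rfl | rfl⟩ | ⟨huv', -⟩
        · rfl
        · rw [hPe1] at hmem; simp at hmem
        · exact absurd huv' huv
      · rintro rfl
        exact ⟨by rw [haccD]; tauto, by rw [hPh0 R1 (by simp [hR1, Ne.symm he])]; simp⟩
    rw [hbase]
    exact topN_of_card_le (by simp [hu])
  have hKv : ∀ R : Finset (H × D), (∀ d, (h0, d) ∉ R) → hProps M ι R e' = ∅ ∨ True →
      dKeeps M ι κ R v = {h0} := by
    intro R hR _
    unfold dKeeps
    have hbase : (univ.filter fun h : H => M.accD v h ∧ v ∈ hProps M ι R h) = {h0} := by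
      ext h
      simp only [Finset.mem_filter, Finset.mem_univ, true_and, Finset.mem_singleton]
      constructor
      · rintro ⟨hacc, hmem⟩
        rw [haccD] at hacc
        rcases hacc with ⟨huv', -⟩ | ⟨-, rfl⟩
        · exact absurd huv'.symm huv
        · rfl
      · rintro rfl
        exact ⟨by rw [haccD]; tauto, by rw [hPh0 R hR]; simp⟩
    rw [hbase]
    exact topN_of_card_le (by simpa using hv)
  have hKo : ∀ (R : Finset (H × D)) d, d ≠ u → d ≠ v → dKeeps M ι κ R d = ∅ := by
    intro R d h1 h2
    unfold dKeeps
    have hbase : (univ.filter fun h : H => M.accD d h ∧ d ∈ hProps M ι R h) = ∅ := by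
      rw [Finset.filter_eq_empty_iff]
      intro h _
      simp [haccD, h1, h2]
    rw [hbase, topN_empty]
  -- interview DA: one rejection, then fixed
  have hstep0 : iStep M ι κ ∅ = R1 := by
    unfold iStep
    rw [Finset.empty_union]
    ext ⟨h, d⟩
    simp only [Finset.mem_filter, Finset.mem_univ, true_and, hR1, Finset.mem_singleton,
      Prod.mk.injEq]
    constructor
    · rintro ⟨hmem, hnk⟩
      rcases eq_or_ne h h0 with rfl | h1
      · rw [hPh0 ∅ (by simp)] at hmem
        simp only [Finset.mem_insert, Finset.mem_singleton] at hmem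
        rcases hmem with rfl | rfl
        · rw [hKu0] at hnk; simp at hnk
        · rw [hKv ∅ (by simp) (Or.inr trivial)] at hnk; simp at hnk
      rcases eq_or_ne h e' with rfl | h2
      · rw [hPe0] at hmem; simp only [Finset.mem_singleton] at hmem; subst hmem
        exact ⟨rfl, rfl⟩
      · rw [hPo ∅ h h1 h2] at hmem; simp at hmem
    · rintro ⟨rfl, rfl⟩
      refine ⟨by rw [hPe0]; simp, ?_⟩
      rw [hKu0]
      simp [he]
  have hstep1 : iStep M ι κ R1 = R1 := by
    unfold iStep
    have hflt : (univ.filter fun p : H × D =>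
        p.2 ∈ hProps M ι R1 p.1 ∧ p.1 ∉ dKeeps M ι κ R1 p.2) = ∅ := by
      rw [Finset.filter_eq_empty_iff]
      rintro ⟨h, d⟩ _
      rintro ⟨hmem, hnk⟩
      rcases eq_or_ne h h0 with rfl | h1
      · rw [hPh0 R1 (by simp [hR1, Ne.symm he])] at hmem
        simp only [Finset.mem_insert, Finset.mem_singleton] at hmem
        rcases hmem with rfl | rfl
        · rw [hKu1] at hnk; simp at hnk
        · rw [hKv R1 (by simp [hR1, Ne.symm he]) (Or.inr trivial)] at hnk; simp at hnk
      rcases eq_or_ne h e' with rfl | h2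
      · rw [hPe1] at hmem; simp at hmem
      · rw [hPo R1 h h1 h2] at hmem; simp at hmem
    rw [hflt]; simp
  have hNpos : 1 ≤ Fintype.card D * Fintype.card H :=
    Nat.one_le_iff_ne_zero.2 (Nat.mul_ne_zero
      (Nat.pos_iff_ne_zero.1 (Fintype.card_pos_iff.2 ⟨u⟩))
      (Nat.pos_iff_ne_zero.1 (Fintype.card_pos_iff.2 ⟨h0⟩)))
  have hiRej : iRej M ι κ = R1 := iterate_eq_of_fix _ _ _ _ hstep0 hstep1 hNpos
  have hV : interviews M ι κ = ({(h0, u), (h0, v)} : Finset (H × D)) := by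
    unfold interviews
    rw [hiRej]
    ext ⟨h, d⟩
    simp only [Finset.mem_filter, Finset.mem_univ, true_and, Finset.mem_insert,
      Finset.mem_singleton, Prod.mk.injEq]
    constructor
    · rintro ⟨hmem, -⟩
      rcases eq_or_ne h h0 with rfl | h1
      · rw [hPh0 R1 (by simp [hR1, Ne.symm he])] at hmem
        simp only [Finset.mem_insert, Finset.mem_singleton] at hmem
        rcases hmem with rfl | rfl
        · exact Or.inl ⟨rfl, rfl⟩
        · exact Or.inr ⟨rfl, rfl⟩
      rcases eq_or_ne h e' with rfl | h2
      · rw [hPe1] at hmem; simp at hmem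
      · rw [hPo R1 h h1 h2] at hmem; simp at hmem
    · rintro (⟨rfl, rfl⟩ | ⟨rfl, rfl⟩)
      · exact ⟨by rw [hPh0 R1 (by simp [hR1, Ne.symm he])]; simp, by rw [hKu1]; simp⟩
      · exact ⟨by rw [hPh0 R1 (by simp [hR1, Ne.symm he])]; simp,
          by rw [hKv R1 (by simp [hR1, Ne.symm he]) (Or.inr trivial)]; simp⟩
  set V : Finset (H × D) := {(h0, u), (h0, v)} with hVdef
  set S1 : Finset (D × H) := {(u, h0)} with hS1
  -- step 2
  have hdPu0 : dProps M V ∅ u = {h0} := by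
    unfold dProps
    have hbase : (univ.filter fun h : H => (h, u) ∈ V ∧ (u, h) ∉ (∅ : Finset (D × H))) = {h0} := by
      ext h
      simp only [hVdef, Finset.mem_filter, Finset.mem_univ, true_and, Finset.notMem_empty,
        not_false_iff, and_true, Finset.mem_insert, Finset.mem_singleton, Prod.mk.injEq]
      constructor
      · rintro (⟨rfl, -⟩ | ⟨rfl, hvu⟩)
        · rfl
        · exact absurd hvu huv
      · rintro rfl; tauto
    rw [hbase]
    exact topN_of_card_le (by simp)
  have hdPu1 : dProps M V S1 u = ∅ := by
    unfold dProps
    have hbase : (univ.filter fun h : H => (h, u) ∈ V ∧ (u, h) ∉ S1) = ∅ := by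
      rw [Finset.filter_eq_empty_iff]
      intro h _
      rintro ⟨hmem, hns⟩
      simp only [hVdef, Finset.mem_insert, Finset.mem_singleton, Prod.mk.injEq] at hmem
      rcases hmem with ⟨rfl, -⟩ | ⟨rfl, hvu⟩
      · exact hns (by simp [hS1])
      · exact absurd hvu huv
    rw [hbase, topN_empty]
  have hdPv : ∀ S : Finset (D × H), (v, h0) ∉ S → dProps M V S v = {h0} := by
    intro S hS
    unfold dProps
    have hbase : (univ.filter fun h : H => (h, v) ∈ V ∧ (v, h) ∉ S) = {h0} := by
      ext h
      simp only [hVdef, Finset.mem_filter, Finset.mem_univ, true_and, Finset.mem_insert,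
        Finset.mem_singleton, Prod.mk.injEq]
      constructor
      · rintro ⟨(⟨rfl, huv'⟩ | ⟨rfl, -⟩), -⟩
        · rfl
        · rfl
      · rintro rfl; exact ⟨by tauto, hS⟩
    rw [hbase]
    exact topN_of_card_le (by simp)
  have hdPo : ∀ (S : Finset (D × H)) d, d ≠ u → d ≠ v → dProps M V S d = ∅ := by
    intro S d h1 h2
    unfold dProps
    have hbase : (univ.filter fun h : H => (h, d) ∈ V ∧ (d, h) ∉ S) = ∅ := by
      rw [Finset.filter_eq_empty_iff]
      intro h _
      rintro ⟨hmem, -⟩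
      simp only [hVdef, Finset.mem_insert, Finset.mem_singleton, Prod.mk.injEq] at hmem
      rcases hmem with ⟨-, hd⟩ | ⟨-, hd⟩
      · exact h1 hd
      · exact h2 hd
    rw [hbase, topN_empty]
  have hhK00 : hKeeps M V ∅ h0 = {v} := by
    unfold hKeeps
    have hbase : (univ.filter fun d : D => h0 ∈ dProps M V ∅ d) = {u, v} := by
      ext d
      simp only [Finset.mem_filter, Finset.mem_univ, true_and, Finset.mem_insert,
        Finset.mem_singleton]
      constructor
      · intro hmem
        by_contra hd
        push_neg at hd
        rw [hdPo ∅ d hd.1 hd.2] at hmem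
        simp at hmem
      · rintro (rfl | rfl)
        · rw [hdPu0]; simp
        · rw [hdPv ∅ (by simp)]; simp
    rw [hbase, hrh0]
    refine topN_one_eq_singleton (by simp) ?_
    intro y hy hne
    simp only [Finset.mem_insert, Finset.mem_singleton] at hy
    rcases hy with rfl | rfl
    · rw [rank2_a, rank2_b _ huv]; omega
    · exact absurd rfl hne
  have hhK01 : hKeeps M V S1 h0 = {v} := by
    unfold hKeeps
    have hbase : (univ.filter fun d : D => h0 ∈ dProps M V S1 d) = {v} := by
      ext d
      simp only [Finset.mem_filter, Finset.mem_univ, true_and, Finset.mem_singleton]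
      constructor
      · intro hmem
        rcases eq_or_ne d u with rfl | h1
        · rw [hdPu1] at hmem; simp at hmem
        rcases eq_or_ne d v with rfl | h2
        · rfl
        · rw [hdPo S1 d h1 h2] at hmem; simp at hmem
      · rintro rfl
        rw [hdPv S1 (by simp [hS1, Ne.symm huv])]; simp
    rw [hbase]
    exact topN_of_card_le (by simp)
  have hmstep0 : mStep M V ∅ = S1 := by
    unfold mStep
    rw [Finset.empty_union]
    ext ⟨d, h⟩
    simp only [Finset.mem_filter, Finset.mem_univ, true_and, hS1, Finset.mem_singleton,
      Prod.mk.injEq]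
    constructor
    · rintro ⟨hmem, hnk⟩
      rcases eq_or_ne d u with rfl | h1
      · rw [hdPu0] at hmem; simp only [Finset.mem_singleton] at hmem; subst hmem
        exact ⟨rfl, rfl⟩
      rcases eq_or_ne d v with rfl | h2
      · rw [hdPv ∅ (by simp)] at hmem; simp only [Finset.mem_singleton] at hmem; subst hmem
        rw [hhK00] at hnk; simp at hnk
      · rw [hdPo ∅ d h1 h2] at hmem; simp at hmem
    · rintro ⟨rfl, rfl⟩
      refine ⟨by rw [hdPu0]; simp, ?_⟩
      rw [hhK00]
      simp [huv]
  have hmstep1 : mStep M V S1 = S1 := by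
    unfold mStep
    have hflt : (univ.filter fun p : D × H =>
        p.2 ∈ dProps M V S1 p.1 ∧ p.1 ∉ hKeeps M V S1 p.2) = ∅ := by
      rw [Finset.filter_eq_empty_iff]
      rintro ⟨d, h⟩ _
      rintro ⟨hmem, hnk⟩
      rcases eq_or_ne d u with rfl | h1
      · rw [hdPu1] at hmem; simp at hmem
      rcases eq_or_ne d v with rfl | h2
      · rw [hdPv S1 (by simp [hS1, Ne.symm huv])] at hmem
        simp only [Finset.mem_singleton] at hmem; subst hmem
        rw [hhK01] at hnk; simp at hnk
      · rw [hdPo S1 d h1 h2] at hmem; simp at hmem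
    rw [hflt]; simp
  have hmRej : mRej M V = S1 := iterate_eq_of_fix _ _ _ _ hmstep0 hmstep1 hNpos
  have hfin : ikMatching M ι κ = ({(v, h0)} : Finset (D × H)) := by
    unfold ikMatching finalMatch
    rw [hV, hmRej]
    ext ⟨d, h⟩
    simp only [Finset.mem_filter, Finset.mem_univ, true_and, Finset.mem_singleton, Prod.mk.injEq]
    constructor
    · rintro ⟨hmem, -⟩
      rcases eq_or_ne d u with rfl | h1
      · rw [hdPu1] at hmem; simp at hmem
      rcases eq_or_ne d v with rfl | h2
      · rw [hdPv S1 (by simp [hS1, Ne.symm huv])] at hmem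
        simp only [Finset.mem_singleton] at hmem
        exact ⟨rfl, hmem⟩
      · rw [hdPo S1 d h1 h2] at hmem; simp at hmem
    · rintro ⟨rfl, rfl⟩
      exact ⟨by rw [hdPv S1 (by simp [hS1, Ne.symm huv])]; simp, by rw [hhK01]; simp⟩
  intro had
  refine had u e' ?_
  rw [hfin]
  refine ⟨by rw [haccD]; tauto, by rw [haccH]; tauto, by simp [huv, Ne.symm huv], ?_, ?_⟩
  · intro h' hh'
    simp only [Finset.mem_singleton, Prod.mk.injEq] at hh'
    exact absurd hh'.1 huv
  · intro d' hd'
    simp only [Finset.mem_singleton, Prod.mk.injEq] at hd'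
    exact absurd hd'.2 he
end MarketBP
section MarketAP
variable {D H : Type*} [Fintype D] [Fintype H] [DecidableEq D] [DecidableEq H]

lemma filter_lt_image_castSucc {k : ℕ} {α : Type*} [DecidableEq α] (f : Fin (k + 1) → α) :
    ((univ : Finset (Fin (k + 1))).filter fun i : Fin (k + 1) => (i : ℕ) < k).image f
      = (univ : Finset (Fin k)).image (fun j : Fin k => f j.castSucc) := by
  ext x
  simp only [Finset.mem_image, Finset.mem_filter, Finset.mem_univ, true_and]
  constructor
  · rintro ⟨i, hi, rfl⟩
    exact ⟨⟨(i : ℕ), hi⟩, congrArg f (Fin.ext rfl)⟩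
  · rintro ⟨j, rfl⟩
    exact ⟨j.castSucc, by simpa using j.isLt, rfl⟩

/-- Market for case A′: hospital `h0` with capacity `k`, doctors `E' 0, …, E' (k-1)`
with capacity ≥ 2 (each with a private better hospital `W j`), and extra doctor `E' k`. -/
noncomputable def MAP (k : ℕ) (h0 : H) (E' : Fin (k + 1) → D) (W : Fin k → H) : Market D H where
  rankDH := fun d => if hd : ∃ j : Fin k, d = E' j.castSucc
    then rank2 (W hd.choose) h0 (encN H) else encN H
  accD := fun d h => decide ((∃ j : Fin k, d = E' j.castSucc ∧ (h = W j ∨ h = h0)) ∨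
    (d = E' (Fin.last k) ∧ h = h0))
  rankHD := fun h => if h = h0 then mkRank E' (encN D) else encN D
  accH := fun h d => decide ((h = h0 ∧ ∃ j : Fin (k + 1), d = E' j) ∨
    (∃ j : Fin k, h = W j ∧ d = E' j.castSucc))

lemma MAP_rankDH_E (k : ℕ) (h0 : H) (E' : Fin (k + 1) → D) (W : Fin k → H)
    (hE' : Function.Injective E') (j : Fin k) :
    (MAP k h0 E' W).rankDH (E' j.castSucc) = rank2 (W j) h0 (encN H) := by
  unfold MAP
  simp only
  rw [dif_pos ⟨j, rfl⟩]
  have hspec := (⟨j, rfl⟩ : ∃ i : Fin k, E' j.castSucc = E' i.castSucc).choose_spec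
  have hc : (⟨j, rfl⟩ : ∃ i : Fin k, E' j.castSucc = E' i.castSucc).choose = j :=
    (Fin.castSucc_injective k (hE' hspec)).symm
  rw [hc]

lemma MAP_strict (k : ℕ) (h0 : H) (E' : Fin (k + 1) → D) (W : Fin k → H)
    (hE' : Function.Injective E') (hW : ∀ j, W j ≠ h0) : (MAP k h0 E' W).Strict := by
  constructor
  · intro d
    show Function.Injective (if hd : ∃ j : Fin k, d = E' j.castSucc
      then rank2 (W hd.choose) h0 (encN H) else encN H)
    split_ifs with hd
    · exact rank2_injective (hW hd.choose) (encN_injective H)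
    · exact encN_injective H
  · intro h
    show Function.Injective (if h = h0 then mkRank E' (encN D) else encN D)
    split_ifs with hh
    · exact mkRank_injective hE' (encN_injective D)
    · exact encN_injective D

lemma MAP_not_adequate (ι : H → ℕ) (κ : D → ℕ) (k : ℕ) (h0 : H)
    (E' : Fin (k + 1) → D) (W : Fin k → H)
    (hE' : Function.Injective E') (hWinj : Function.Injective W) (hW : ∀ j, W j ≠ h0)
    (hι0 : ι h0 = k) (hκE : ∀ j : Fin k, 2 ≤ κ (E' j.castSucc)) (hιW : ∀ j, 1 ≤ ι (W j)) :
    ¬ Adequate (MAP k h0 E' W) ι κ := by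
  set M := MAP k h0 E' W with hM
  set E : Fin k → D := fun j => E' j.castSucc with hEdef
  set e : D := E' (Fin.last k) with hedef
  have hEinj : Function.Injective E := fun a b hab => Fin.castSucc_injective k (hE' hab)
  have hEe : ∀ j : Fin k, E j ≠ e := by
    intro j hj
    exact absurd (hE' hj) (Fin.castSucc_lt_last j).ne
  have haccH : ∀ h d, (M.accH h d : Prop) ↔ ((h = h0 ∧ ∃ j : Fin (k + 1), d = E' j) ∨
      (∃ j : Fin k, h = W j ∧ d = E j)) := by
    intro h d; simp [hM, MAP, hEdef]
  have haccD : ∀ d h, (M.accD d h : Prop) ↔ ((∃ j : Fin k, d = E j ∧ (h = W j ∨ h = h0)) ∨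
      (d = e ∧ h = h0)) := by
    intro d h; simp [hM, MAP, hEdef, hedef]
  have hrE : ∀ j : Fin k, M.rankDH (E j) = rank2 (W j) h0 (encN H) := fun j =>
    MAP_rankDH_E k h0 E' W hE' j
  have hrh0 : M.rankHD h0 = mkRank E' (encN D) := by simp [hM, MAP]
  set EImg : Finset D := (univ : Finset (Fin k)).image E with hEImg
  -- hProps at ∅
  have hPh0 : hProps M ι ∅ h0 = EImg := by
    unfold hProps
    have hbase : (univ.filter fun d : D => M.accH h0 d ∧ (h0, d) ∉ (∅ : Finset (H × D)))
        = (univ : Finset (Fin (k + 1))).image E' := by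
      ext d
      simp only [Finset.mem_filter, Finset.mem_univ, true_and, Finset.notMem_empty,
        not_false_iff, and_true, haccH, Finset.mem_image]
      constructor
      · rintro (⟨j, rfl⟩ | ⟨j, hj, -⟩)
        · exact ⟨j, rfl⟩
        · exact absurd hj.symm (hW j)
      · rintro ⟨j, rfl⟩
        exact Or.inl ⟨j, rfl⟩
    rw [hbase, hrh0, hι0,
      topN_image_univ E' hE' (mkRank E' (encN D)) (fun i => mkRank_apply hE' (encN D) i),
      filter_lt_image_castSucc]
  have hPW : ∀ j : Fin k, hProps M ι ∅ (W j) = {E j} := by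
    intro j
    unfold hProps
    have hbase : (univ.filter fun d : D => M.accH (W j) d ∧ (W j, d) ∉ (∅ : Finset (H × D)))
        = {E j} := by
      ext d
      simp only [Finset.mem_filter, Finset.mem_univ, true_and, Finset.notMem_empty,
        not_false_iff, and_true, haccH, Finset.mem_singleton]
      constructor
      · rintro (⟨hj, -⟩ | ⟨j', hj', rfl⟩)
        · exact absurd hj (hW j)
        · rw [hWinj hj']
      · rintro rfl
        exact Or.inr ⟨j, rfl, rfl⟩
    rw [hbase]
    exact topN_of_card_le (by simpa using hιW j)
  have hPo : ∀ h, h ≠ h0 → (∀ j, h ≠ W j) → hProps M ι ∅ h = ∅ := by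
    intro h h1 h2
    unfold hProps
    have hbase : (univ.filter fun d : D => M.accH h d ∧ (h, d) ∉ (∅ : Finset (H × D))) = ∅ := by
      rw [Finset.filter_eq_empty_iff]
      intro d _
      rintro ⟨hacc, -⟩
      rw [haccH] at hacc
      rcases hacc with ⟨hh, -⟩ | ⟨j, hh, -⟩
      · exact h1 hh
      · exact h2 j hh
    rw [hbase, topN_empty]
  -- dKeeps at ∅
  have hKE : ∀ j : Fin k, dKeeps M ι κ ∅ (E j) = {W j, h0} := by
    intro j
    unfold dKeeps
    have hbase : (univ.filter fun h : H => M.accD (E j) h ∧ E j ∈ hProps M ι ∅ h)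
        = {W j, h0} := by
      ext h
      simp only [Finset.mem_filter, Finset.mem_univ, true_and, Finset.mem_insert,
        Finset.mem_singleton]
      constructor
      · rintro ⟨hacc, -⟩
        rw [haccD] at hacc
        rcases hacc with ⟨j', hj', hh⟩ | ⟨hj, -⟩
        · rw [← hEinj hj'] at hh; exact hh
        · exact absurd hj (hEe j)
      · rintro (rfl | rfl)
        · exact ⟨by rw [haccD]; exact Or.inl ⟨j, rfl, Or.inl rfl⟩,
            by rw [hPW j]; simp⟩
        · exact ⟨by rw [haccD]; exact Or.inl ⟨j, rfl, Or.inr rfl⟩,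
            by rw [hPh0, hEImg]; exact Finset.mem_image_of_mem E (Finset.mem_univ j)⟩
    rw [hbase]
    refine topN_of_card_le (le_trans ((Finset.card_insert_le _ _).trans (by simp)) (hκE j))
  have hKo : ∀ d, (∀ j, d ≠ E j) → dKeeps M ι κ ∅ d = ∅ := by
    intro d hd
    unfold dKeeps
    have hbase : (univ.filter fun h : H => M.accD d h ∧ d ∈ hProps M ι ∅ h) = ∅ := by
      rw [Finset.filter_eq_empty_iff]
      intro h _
      rintro ⟨hacc, hmem⟩
      rw [haccD] at hacc
      rcases hacc with ⟨j, hj, -⟩ | ⟨rfl, rfl⟩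
      · exact hd j hj
      · rw [hPh0, hEImg] at hmem
        simp only [Finset.mem_image, Finset.mem_univ, true_and] at hmem
        obtain ⟨j, hj⟩ := hmem
        exact hd j hj.symm
    rw [hbase, topN_empty]
  -- interview DA is at a fixed point
  have hfix : iStep M ι κ ∅ = ∅ := by
    unfold iStep
    have hflt : (univ.filter fun p : H × D =>
        p.2 ∈ hProps M ι ∅ p.1 ∧ p.1 ∉ dKeeps M ι κ ∅ p.2) = ∅ := by
      rw [Finset.filter_eq_empty_iff]
      rintro ⟨h, d⟩ _
      rintro ⟨hmem, hnk⟩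
      rcases eq_or_ne h h0 with rfl | h1
      · rw [hPh0, hEImg] at hmem
        simp only [Finset.mem_image, Finset.mem_univ, true_and] at hmem
        obtain ⟨j, rfl⟩ := hmem
        rw [hKE j] at hnk
        simp at hnk
      by_cases h2 : ∃ j, h = W j
      · obtain ⟨j, rfl⟩ := h2
        rw [hPW j] at hmem
        simp only [Finset.mem_singleton] at hmem
        subst hmem
        rw [hKE j] at hnk
        simp at hnk
      · push_neg at h2
        rw [hPo h h1 h2] at hmem
        simp at hmem
    rw [hflt]; simp
  have hiRej : iRej M ι κ = ∅ := Function.iterate_fixed hfix _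
  set V : Finset (H × D) := ((univ : Finset (Fin k)).image fun j => (h0, E j)) ∪
      ((univ : Finset (Fin k)).image fun j => (W j, E j)) with hVdef
  have hV : interviews M ι κ = V := by
    unfold interviews
    rw [hiRej]
    ext ⟨h, d⟩
    simp only [hVdef, Finset.mem_filter, Finset.mem_univ, true_and, Finset.mem_union,
      Finset.mem_image, Prod.mk.injEq]
    constructor
    · rintro ⟨hmem, -⟩
      rcases eq_or_ne h h0 with rfl | h1
      · rw [hPh0, hEImg] at hmem
        simp only [Finset.mem_image, Finset.mem_univ, true_and] at hmem
        obtain ⟨j, rfl⟩ := hmem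
        exact Or.inl ⟨j, rfl, rfl⟩
      by_cases h2 : ∃ j, h = W j
      · obtain ⟨j, rfl⟩ := h2
        rw [hPW j] at hmem
        simp only [Finset.mem_singleton] at hmem
        subst hmem
        exact Or.inr ⟨j, rfl, rfl⟩
      · push_neg at h2
        rw [hPo h h1 h2] at hmem
        simp at hmem
    · rintro (⟨j, rfl, rfl⟩ | ⟨j, rfl, rfl⟩)
      · exact ⟨by rw [hPh0, hEImg]; exact Finset.mem_image_of_mem E (Finset.mem_univ j),
          by rw [hKE j]; simp⟩
      · exact ⟨by rw [hPW j]; simp, by rw [hKE j]; simp⟩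
  -- step 2
  have hdPE : ∀ j : Fin k, dProps M V ∅ (E j) = {W j} := by
    intro j
    unfold dProps
    have hbase : (univ.filter fun h : H => (h, E j) ∈ V ∧ (E j, h) ∉ (∅ : Finset (D × H)))
        = {W j, h0} := by
      ext h
      simp only [hVdef, Finset.mem_filter, Finset.mem_univ, true_and, Finset.notMem_empty,
        not_false_iff, and_true, Finset.mem_union, Finset.mem_image, Prod.mk.injEq,
        Finset.mem_insert, Finset.mem_singleton]
      constructor
      · rintro (⟨j', rfl, hj'⟩ | ⟨j', rfl, hj'⟩)
        · exact Or.inr rfl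
        · rw [hEinj hj'.symm]; exact Or.inl rfl
      · rintro (rfl | rfl)
        · exact Or.inr ⟨j, rfl, rfl⟩
        · exact Or.inl ⟨j, rfl, rfl⟩
    rw [hbase, hrE j]
    refine topN_one_eq_singleton (by simp) ?_
    intro y hy hne
    simp only [Finset.mem_insert, Finset.mem_singleton] at hy
    rcases hy with rfl | rfl
    · exact absurd rfl hne
    · rw [rank2_a, rank2_b _ (Ne.symm (hW j))]; omega
  have hdPo : ∀ d, (∀ j, d ≠ E j) → dProps M V ∅ d = ∅ := by
    intro d hd
    unfold dProps
    have hbase : (univ.filter fun h : H => (h, d) ∈ V ∧ (d, h) ∉ (∅ : Finset (D × H))) = ∅ := by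
      rw [Finset.filter_eq_empty_iff]
      intro h _
      rintro ⟨hmem, -⟩
      simp only [hVdef, Finset.mem_union, Finset.mem_image, Finset.mem_univ, true_and,
        Prod.mk.injEq] at hmem
      rcases hmem with ⟨j, -, hj⟩ | ⟨j, -, hj⟩ <;> exact hd j hj.symm
    rw [hbase, topN_empty]
  have hhKW : ∀ j : Fin k, hKeeps M V ∅ (W j) = {E j} := by
    intro j
    unfold hKeeps
    have hbase : (univ.filter fun d : D => W j ∈ dProps M V ∅ d) = {E j} := by
      ext d
      simp only [Finset.mem_filter, Finset.mem_univ, true_and, Finset.mem_singleton]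
      constructor
      · intro hmem
        by_cases hd : ∃ j', d = E j'
        · obtain ⟨j', rfl⟩ := hd
          rw [hdPE j'] at hmem
          simp only [Finset.mem_singleton] at hmem
          rw [hWinj hmem]
        · push_neg at hd
          rw [hdPo d hd] at hmem
          simp at hmem
      · rintro rfl
        rw [hdPE j]; simp
    rw [hbase]
    exact topN_of_card_le (by simp)
  have hhKo : ∀ h, (∀ j, h ≠ W j) → hKeeps M V ∅ h = ∅ := by
    intro h hh
    unfold hKeeps
    have hbase : (univ.filter fun d : D => h ∈ dProps M V ∅ d) = ∅ := by
      rw [Finset.filter_eq_empty_iff]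
      intro d _
      intro hmem
      by_cases hd : ∃ j', d = E j'
      · obtain ⟨j', rfl⟩ := hd
        rw [hdPE j'] at hmem
        simp only [Finset.mem_singleton] at hmem
        exact hh j' hmem
      · push_neg at hd
        rw [hdPo d hd] at hmem
        simp at hmem
    rw [hbase, topN_empty]
  have hmfix : mStep M V ∅ = ∅ := by
    unfold mStep
    have hflt : (univ.filter fun p : D × H =>
        p.2 ∈ dProps M V ∅ p.1 ∧ p.1 ∉ hKeeps M V ∅ p.2) = ∅ := by
      rw [Finset.filter_eq_empty_iff]
      rintro ⟨d, h⟩ _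
      rintro ⟨hmem, hnk⟩
      by_cases hd : ∃ j', d = E j'
      · obtain ⟨j', rfl⟩ := hd
        rw [hdPE j'] at hmem
        simp only [Finset.mem_singleton] at hmem
        subst hmem
        rw [hhKW j'] at hnk
        simp at hnk
      · push_neg at hd
        rw [hdPo d hd] at hmem
        simp at hmem
    rw [hflt]; simp
  have hmRej : mRej M V = ∅ := Function.iterate_fixed hmfix _
  have hfin : ikMatching M ι κ = (univ : Finset (Fin k)).image fun j => (E j, W j) := by
    unfold ikMatching finalMatch
    rw [hV, hmRej]
    ext ⟨d, h⟩
    simp only [Finset.mem_filter, Finset.mem_univ, true_and, Finset.mem_image, Prod.mk.injEq]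
    constructor
    · rintro ⟨hmem, -⟩
      by_cases hd : ∃ j', d = E j'
      · obtain ⟨j', rfl⟩ := hd
        rw [hdPE j'] at hmem
        simp only [Finset.mem_singleton] at hmem
        exact ⟨j', rfl, hmem.symm⟩
      · push_neg at hd
        rw [hdPo d hd] at hmem
        simp at hmem
    · rintro ⟨j, rfl, rfl⟩
      exact ⟨by rw [hdPE j]; simp, by rw [hhKW j]; simp⟩
  intro had
  refine had e h0 ?_
  rw [hfin]
  refine ⟨?_, ?_, ?_, ?_, ?_⟩
  · rw [haccD]; exact Or.inr ⟨rfl, rfl⟩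
  · rw [haccH]; exact Or.inl ⟨rfl, Fin.last k, rfl⟩
  · simp only [Finset.mem_image, Finset.mem_univ, true_and, Prod.mk.injEq, not_exists]
    rintro j ⟨hj, -⟩
    exact hEe j hj
  · intro h' hh'
    simp only [Finset.mem_image, Finset.mem_univ, true_and, Prod.mk.injEq] at hh'
    obtain ⟨j, hj, -⟩ := hh'
    exact absurd hj (hEe j)
  · intro d' hd'
    simp only [Finset.mem_image, Finset.mem_univ, true_and, Prod.mk.injEq] at hd'
    obtain ⟨j, -, hj⟩ := hd'
    exact absurd hj (hW j)
end MarketAP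
section MarketA
variable {D H : Type*} [Fintype D] [Fintype H] [DecidableEq D] [DecidableEq H]

/-- Market for case A: doctor `d0` with capacity `k`, hospitals `G' 0, …, G' (k-1)` with
capacity ≥ 2 (each with a private better doctor `E j`), and extra hospital `G' k`. -/
noncomputable def MA (k : ℕ) (d0 : D) (G' : Fin (k + 1) → H) (E : Fin k → D) : Market D H where
  rankDH := fun d => if d = d0 then mkRank G' (encN H) else encN H
  accD := fun d h => decide ((d = d0 ∧ ∃ j : Fin (k + 1), h = G' j) ∨
    (∃ j : Fin k, d = E j ∧ h = G' j.castSucc))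
  rankHD := fun h => if hh : ∃ j : Fin k, h = G' j.castSucc
    then rank2 (E hh.choose) d0 (encN D) else encN D
  accH := fun h d => decide ((∃ j : Fin k, h = G' j.castSucc ∧ (d = d0 ∨ d = E j)) ∨
    (h = G' (Fin.last k) ∧ d = d0))

lemma MA_rankHD_G (k : ℕ) (d0 : D) (G' : Fin (k + 1) → H) (E : Fin k → D)
    (hG' : Function.Injective G') (j : Fin k) :
    (MA k d0 G' E).rankHD (G' j.castSucc) = rank2 (E j) d0 (encN D) := by
  unfold MA
  simp only
  rw [dif_pos ⟨j, rfl⟩]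
  have hspec := (⟨j, rfl⟩ : ∃ i : Fin k, G' j.castSucc = G' i.castSucc).choose_spec
  have hc : (⟨j, rfl⟩ : ∃ i : Fin k, G' j.castSucc = G' i.castSucc).choose = j :=
    (Fin.castSucc_injective k (hG' hspec)).symm
  rw [hc]

lemma MA_strict (k : ℕ) (d0 : D) (G' : Fin (k + 1) → H) (E : Fin k → D)
    (hG' : Function.Injective G') (hE : ∀ j, E j ≠ d0) : (MA k d0 G' E).Strict := by
  constructor
  · intro d
    show Function.Injective (if d = d0 then mkRank G' (encN H) else encN H)
    split_ifs with hd
    · exact mkRank_injective hG' (encN_injective H)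
    · exact encN_injective H
  · intro h
    show Function.Injective (if hh : ∃ j : Fin k, h = G' j.castSucc
      then rank2 (E hh.choose) d0 (encN D) else encN D)
    split_ifs with hh
    · exact rank2_injective (hE hh.choose) (encN_injective D)
    · exact encN_injective D

lemma MA_not_adequate (ι : H → ℕ) (κ : D → ℕ) (k : ℕ) (d0 : D)
    (G' : Fin (k + 1) → H) (E : Fin k → D)
    (hG' : Function.Injective G') (hEinj : Function.Injective E) (hE : ∀ j, E j ≠ d0)
    (hκ0 : κ d0 = k) (hιG : ∀ j : Fin k, 2 ≤ ι (G' j.castSucc)) (hι0 : 1 ≤ ι (G' (Fin.last k)))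
    (hκE : ∀ j, 1 ≤ κ (E j)) :
    ¬ Adequate (MA k d0 G' E) ι κ := by
  set M := MA k d0 G' E with hM
  set G : Fin k → H := fun j => G' j.castSucc with hGdef
  set h0 : H := G' (Fin.last k) with h0def
  have hGinj : Function.Injective G := fun a b hab => Fin.castSucc_injective k (hG' hab)
  have hGh0 : ∀ j : Fin k, G j ≠ h0 := by
    intro j hj
    exact absurd (hG' hj) (Fin.castSucc_lt_last j).ne
  have haccH : ∀ h d, (M.accH h d : Prop) ↔ ((∃ j : Fin k, h = G j ∧ (d = d0 ∨ d = E j)) ∨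
      (h = h0 ∧ d = d0)) := by
    intro h d; simp [hM, MA, hGdef, h0def]
  have haccD : ∀ d h, (M.accD d h : Prop) ↔ ((d = d0 ∧ ∃ j : Fin (k + 1), h = G' j) ∨
      (∃ j : Fin k, d = E j ∧ h = G j)) := by
    intro d h; simp [hM, MA, hGdef]
  have hrG : ∀ j : Fin k, M.rankHD (G j) = rank2 (E j) d0 (encN D) := fun j =>
    MA_rankHD_G k d0 G' E hG' j
  have hrd0 : M.rankDH d0 = mkRank G' (encN H) := by simp [hM, MA]
  have hrd0G : ∀ i : Fin k, M.rankDH d0 (G i) = (i : ℕ) := by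
    intro i
    rw [hrd0, hGdef]
    show mkRank G' (encN H) (G' i.castSucc) = _
    rw [mkRank_apply hG' (encN H) i.castSucc]
    simp
  set GImg : Finset H := (univ : Finset (Fin k)).image G with hGImg
  set R1 : Finset (H × D) := {(h0, d0)} with hR1
  have hh0GImg : h0 ∉ GImg := by
    rw [hGImg]
    simp only [Finset.mem_image, Finset.mem_univ, true_and, not_exists]
    intro j hj
    exact hGh0 j hj
  -- hProps (stage 1), for R = ∅ and R = R1
  have hPG : ∀ (R : Finset (H × D)) (j : Fin k), (∀ d, (G j, d) ∉ R) →
      hProps M ι R (G j) = {d0, E j} := by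
    intro R j hR
    unfold hProps
    have hbase : (univ.filter fun d : D => M.accH (G j) d ∧ (G j, d) ∉ R) = {d0, E j} := by
      ext d
      simp only [Finset.mem_filter, Finset.mem_univ, true_and, Finset.mem_insert,
        Finset.mem_singleton]
      constructor
      · rintro ⟨hacc, -⟩
        rw [haccH] at hacc
        rcases hacc with ⟨j', hj', hd⟩ | ⟨hj, -⟩
        · rw [← hGinj hj'] at hd; exact hd
        · exact absurd hj (hGh0 j)
      · rintro (rfl | rfl)
        · exact ⟨by rw [haccH]; exact Or.inl ⟨j, rfl, Or.inl rfl⟩, hR d⟩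
        · exact ⟨by rw [haccH]; exact Or.inl ⟨j, rfl, Or.inr rfl⟩, hR _⟩
    rw [hbase]
    exact topN_of_card_le (le_trans ((Finset.card_insert_le _ _).trans (by simp)) (hιG j))
  have hPh00 : hProps M ι ∅ h0 = {d0} := by
    unfold hProps
    have hbase : (univ.filter fun d : D => M.accH h0 d ∧ (h0, d) ∉ (∅ : Finset (H × D)))
        = {d0} := by
      ext d
      simp only [Finset.mem_filter, Finset.mem_univ, true_and, Finset.notMem_empty,
        not_false_iff, and_true, Finset.mem_singleton]
      constructor
      · intro hacc
        rw [haccH] at hacc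
        rcases hacc with ⟨j', hj', -⟩ | ⟨-, hd⟩
        · exact absurd hj'.symm (hGh0 j')
        · exact hd
      · rintro rfl
        rw [haccH]; exact Or.inr ⟨rfl, rfl⟩
    rw [hbase]
    exact topN_of_card_le (by simpa using hι0)
  have hPh01 : hProps M ι R1 h0 = ∅ := by
    unfold hProps
    have hbase : (univ.filter fun d : D => M.accH h0 d ∧ (h0, d) ∉ R1) = ∅ := by
      rw [Finset.filter_eq_empty_iff]
      intro d _
      rintro ⟨hacc, hnr⟩
      rw [haccH] at hacc
      rcases hacc with ⟨j', hj', -⟩ | ⟨-, rfl⟩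
      · exact absurd hj'.symm (hGh0 j')
      · exact hnr (by rw [hR1]; simp)
    rw [hbase, topN_empty]
  have hPo : ∀ (R : Finset (H × D)) h, h ≠ h0 → (∀ j, h ≠ G j) → hProps M ι R h = ∅ := by
    intro R h h1 h2
    unfold hProps
    have hbase : (univ.filter fun d : D => M.accH h d ∧ (h, d) ∉ R) = ∅ := by
      rw [Finset.filter_eq_empty_iff]
      intro d _
      rintro ⟨hacc, -⟩
      rw [haccH] at hacc
      rcases hacc with ⟨j', hj', -⟩ | ⟨hh, -⟩
      · exact h2 j' hj'
      · exact h1 hh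
    rw [hbase, topN_empty]
  have hGR1 : ∀ (j : Fin k) (d : D), (G j, d) ∉ R1 := by
    intro j d
    rw [hR1]
    simp only [Finset.mem_singleton, Prod.mk.injEq, not_and]
    intro hj
    exact absurd hj (hGh0 j)
  -- dKeeps (stage 1)
  have hKd00 : dKeeps M ι κ ∅ d0 = GImg := by
    unfold dKeeps
    have hbase : (univ.filter fun h : H => M.accD d0 h ∧ d0 ∈ hProps M ι ∅ h)
        = (univ : Finset (Fin (k + 1))).image G' := by
      ext h
      simp only [Finset.mem_filter, Finset.mem_univ, true_and, Finset.mem_image]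
      constructor
      · rintro ⟨hacc, -⟩
        rw [haccD] at hacc
        rcases hacc with ⟨-, j, rfl⟩ | ⟨j, hj, -⟩
        · exact ⟨j, rfl⟩
        · exact absurd hj.symm (hE j)
      · rintro ⟨i, rfl⟩
        refine ⟨by rw [haccD]; exact Or.inl ⟨rfl, i, rfl⟩, ?_⟩
        rcases eq_or_ne i (Fin.last k) with rfl | hi
        · rw [← h0def, hPh00]; simp
        · obtain ⟨j, rfl⟩ := Fin.exists_castSucc_eq.2 hi
          have hgm : d0 ∈ hProps M ι ∅ (G j) := by rw [hPG ∅ j (by simp)]; simp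
          exact hgm
    rw [hbase, hrd0, hκ0,
      topN_image_univ G' hG' (mkRank G' (encN H)) (fun i => mkRank_apply hG' (encN H) i),
      filter_lt_image_castSucc, hGImg]
  have hKd01 : dKeeps M ι κ R1 d0 = GImg := by
    unfold dKeeps
    have hbase : (univ.filter fun h : H => M.accD d0 h ∧ d0 ∈ hProps M ι R1 h) = GImg := by
      ext h
      simp only [Finset.mem_filter, Finset.mem_univ, true_and, hGImg, Finset.mem_image]
      constructor
      · rintro ⟨hacc, hmem⟩
        rw [haccD] at hacc
        rcases hacc with ⟨-, i, rfl⟩ | ⟨j, hj, -⟩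
        · rcases eq_or_ne i (Fin.last k) with rfl | hi
          · rw [← h0def, hPh01] at hmem; simp at hmem
          · obtain ⟨j, rfl⟩ := Fin.exists_castSucc_eq.2 hi
            exact ⟨j, rfl⟩
        · exact absurd hj.symm (hE j)
      · rintro ⟨j, rfl⟩
        refine ⟨by rw [haccD]; exact Or.inl ⟨rfl, j.castSucc, rfl⟩, ?_⟩
        rw [hPG R1 j (hGR1 j)]
        simp
    rw [hbase, hGImg, hκ0,
      topN_image_univ G hGinj (M.rankDH d0) hrd0G]
    congr 1
    rw [Finset.filter_true_of_mem]
    intro i _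
    exact i.isLt
  have hKE : ∀ (R : Finset (H × D)) (j : Fin k), (∀ d, (G j, d) ∉ R) →
      dKeeps M ι κ R (E j) = {G j} := by
    intro R j hR
    unfold dKeeps
    have hbase : (univ.filter fun h : H => M.accD (E j) h ∧ E j ∈ hProps M ι R h) = {G j} := by
      ext h
      simp only [Finset.mem_filter, Finset.mem_univ, true_and, Finset.mem_singleton]
      constructor
      · rintro ⟨hacc, -⟩
        rw [haccD] at hacc
        rcases hacc with ⟨hj, -⟩ | ⟨j', hj', rfl⟩
        · exact absurd hj (hE j)
        · rw [← hEinj hj']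
      · rintro rfl
        refine ⟨by rw [haccD]; exact Or.inr ⟨j, rfl, rfl⟩, ?_⟩
        rw [hPG R j hR]; simp
    rw [hbase]
    exact topN_of_card_le (by simpa using hκE j)
  have hKo : ∀ (R : Finset (H × D)) d, d ≠ d0 → (∀ j, d ≠ E j) → dKeeps M ι κ R d = ∅ := by
    intro R d h1 h2
    unfold dKeeps
    have hbase : (univ.filter fun h : H => M.accD d h ∧ d ∈ hProps M ι R h) = ∅ := by
      rw [Finset.filter_eq_empty_iff]
      intro h _
      rintro ⟨hacc, -⟩
      rw [haccD] at hacc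
      rcases hacc with ⟨hd, -⟩ | ⟨j, hj, -⟩
      · exact h1 hd
      · exact h2 j hj
    rw [hbase, topN_empty]
  -- stage-1 fixed point
  have hstep0 : iStep M ι κ ∅ = R1 := by
    unfold iStep
    rw [Finset.empty_union]
    ext ⟨h, d⟩
    simp only [Finset.mem_filter, Finset.mem_univ, true_and, hR1, Finset.mem_singleton,
      Prod.mk.injEq]
    constructor
    · rintro ⟨hmem, hnk⟩
      by_cases h2 : ∃ j, h = G j
      · obtain ⟨j, rfl⟩ := h2
        rw [hPG ∅ j (by simp)] at hmem
        simp only [Finset.mem_insert, Finset.mem_singleton] at hmem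
        rcases hmem with rfl | rfl
        · rw [hKd00] at hnk
          exact absurd (by rw [hGImg]; exact Finset.mem_image_of_mem G (Finset.mem_univ j)) hnk
        · rw [hKE ∅ j (by simp)] at hnk; simp at hnk
      push_neg at h2
      rcases eq_or_ne h h0 with rfl | h1
      · rw [hPh00] at hmem
        simp only [Finset.mem_singleton] at hmem
        subst hmem
        exact ⟨rfl, rfl⟩
      · rw [hPo ∅ h h1 h2] at hmem; simp at hmem
    · rintro ⟨rfl, rfl⟩
      refine ⟨by rw [hPh00]; simp, ?_⟩
      rw [hKd00]
      exact hh0GImg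
  have hstep1 : iStep M ι κ R1 = R1 := by
    unfold iStep
    have hflt : (univ.filter fun p : H × D =>
        p.2 ∈ hProps M ι R1 p.1 ∧ p.1 ∉ dKeeps M ι κ R1 p.2) = ∅ := by
      rw [Finset.filter_eq_empty_iff]
      rintro ⟨h, d⟩ _
      rintro ⟨hmem, hnk⟩
      by_cases h2 : ∃ j, h = G j
      · obtain ⟨j, rfl⟩ := h2
        rw [hPG R1 j (hGR1 j)] at hmem
        simp only [Finset.mem_insert, Finset.mem_singleton] at hmem
        rcases hmem with rfl | rfl
        · rw [hKd01] at hnk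
          exact absurd (by rw [hGImg]; exact Finset.mem_image_of_mem G (Finset.mem_univ j)) hnk
        · rw [hKE R1 j (hGR1 j)] at hnk; simp at hnk
      push_neg at h2
      rcases eq_or_ne h h0 with rfl | h1
      · rw [hPh01] at hmem; simp at hmem
      · rw [hPo R1 h h1 h2] at hmem; simp at hmem
    rw [hflt]; simp
  have hNpos : 1 ≤ Fintype.card D * Fintype.card H :=
    Nat.one_le_iff_ne_zero.2 (Nat.mul_ne_zero
      (Nat.pos_iff_ne_zero.1 (Fintype.card_pos_iff.2 ⟨d0⟩))
      (Nat.pos_iff_ne_zero.1 (Fintype.card_pos_iff.2 ⟨h0⟩)))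
  have hiRej : iRej M ι κ = R1 := iterate_eq_of_fix _ _ _ _ hstep0 hstep1 hNpos
  set V : Finset (H × D) := ((univ : Finset (Fin k)).image fun j => (G j, d0)) ∪
      ((univ : Finset (Fin k)).image fun j => (G j, E j)) with hVdef
  have hV : interviews M ι κ = V := by
    unfold interviews
    rw [hiRej]
    ext ⟨h, d⟩
    simp only [hVdef, Finset.mem_filter, Finset.mem_univ, true_and, Finset.mem_union,
      Finset.mem_image, Prod.mk.injEq]
    constructor
    · rintro ⟨hmem, -⟩
      by_cases h2 : ∃ j, h = G j
      · obtain ⟨j, rfl⟩ := h2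
        rw [hPG R1 j (hGR1 j)] at hmem
        simp only [Finset.mem_insert, Finset.mem_singleton] at hmem
        rcases hmem with rfl | rfl
        · exact Or.inl ⟨j, rfl, rfl⟩
        · exact Or.inr ⟨j, rfl, rfl⟩
      push_neg at h2
      rcases eq_or_ne h h0 with rfl | h1
      · rw [hPh01] at hmem; simp at hmem
      · rw [hPo R1 h h1 h2] at hmem; simp at hmem
    · rintro (⟨j, rfl, rfl⟩ | ⟨j, rfl, rfl⟩)
      · exact ⟨by rw [hPG R1 j (hGR1 j)]; simp,
          by rw [hKd01, hGImg]; exact Finset.mem_image_of_mem G (Finset.mem_univ j)⟩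
      · exact ⟨by rw [hPG R1 j (hGR1 j)]; simp, by rw [hKE R1 j (hGR1 j)]; simp⟩
  -- stage 2: the cascade
  set Sf : ℕ → Finset (D × H) := fun r =>
    (univ.filter fun i : Fin k => (i : ℕ) < r).image (fun i => (d0, G i)) with hSf
  have hSmem : ∀ (r : ℕ) (d : D) (h : H), (d, h) ∈ Sf r ↔ ∃ i : Fin k, (i : ℕ) < r ∧
      d = d0 ∧ h = G i := by
    intro r d h
    rw [hSf]
    simp only [Finset.mem_image, Finset.mem_filter, Finset.mem_univ, true_and, Prod.mk.injEq]
    constructor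
    · rintro ⟨i, hi, h1, h2⟩
      exact ⟨i, hi, h1.symm, h2.symm⟩
    · rintro ⟨i, hi, rfl, rfl⟩
      exact ⟨i, hi, rfl, rfl⟩
  have hVmemd0 : ∀ h : H, ((h, d0) ∈ V ↔ ∃ j : Fin k, h = G j) := by
    intro h
    simp only [hVdef, Finset.mem_union, Finset.mem_image, Finset.mem_univ, true_and,
      and_true, Prod.mk.injEq]
    constructor
    · rintro (⟨j, hj⟩ | ⟨j, hj, hd⟩)
      · exact ⟨j, hj.symm⟩
      · exact absurd hd (hE j)
    · rintro ⟨j, rfl⟩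
      exact Or.inl ⟨j, rfl⟩
  have hVmemE : ∀ (j : Fin k) (h : H), ((h, E j) ∈ V ↔ h = G j) := by
    intro j h
    simp only [hVdef, Finset.mem_union, Finset.mem_image, Finset.mem_univ, true_and,
      Prod.mk.injEq]
    constructor
    · rintro (⟨j', -, hd⟩ | ⟨j', hj', hd⟩)
      · exact absurd hd.symm (hE j)
      · rw [← hj', hEinj hd]
    · rintro rfl
      exact Or.inr ⟨j, rfl, rfl⟩
  -- dProps along the cascade
  have hdP0lt : ∀ (r : ℕ) (hr : r < k), dProps M V (Sf r) d0 = {G ⟨r, hr⟩} := by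
    intro r hr
    unfold dProps
    refine topN_one_eq_singleton ?_ ?_
    · simp only [Finset.mem_filter, Finset.mem_univ, true_and]
      refine ⟨(hVmemd0 _).2 ⟨⟨r, hr⟩, rfl⟩, ?_⟩
      rw [hSmem]
      rintro ⟨i, hi, -, hGi⟩
      rw [← hGinj hGi] at hi
      simp at hi
    · intro y hy hne
      simp only [Finset.mem_filter, Finset.mem_univ, true_and] at hy
      obtain ⟨hyV, hyS⟩ := hy
      obtain ⟨i, rfl⟩ := (hVmemd0 _).1 hyV
      rw [hSmem] at hyS
      have hri : ¬ (i : ℕ) < r := by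
        intro hi
        exact hyS ⟨i, hi, rfl, rfl⟩
      rw [hrd0G, hrd0G]
      have h1 : (⟨r, hr⟩ : Fin k) ≠ i := fun hh => hne (congrArg G hh.symm)
      have h2 : (r : ℕ) ≠ (i : ℕ) := fun hh => h1 (Fin.ext hh)
      have h3 : ((⟨r, hr⟩ : Fin k) : ℕ) = r := rfl
      omega
  have hdP0k : dProps M V (Sf k) d0 = ∅ := by
    unfold dProps
    have hbase : (univ.filter fun h : H => (h, d0) ∈ V ∧ (d0, h) ∉ Sf k) = ∅ := by
      rw [Finset.filter_eq_empty_iff]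
      intro h _
      rintro ⟨hV', hnS⟩
      obtain ⟨j, rfl⟩ := (hVmemd0 _).1 hV'
      exact hnS ((hSmem _ _ _).2 ⟨j, j.isLt, rfl, rfl⟩)
    rw [hbase, topN_empty]
  have hdPE : ∀ (r : ℕ) (j : Fin k), dProps M V (Sf r) (E j) = {G j} := by
    intro r j
    unfold dProps
    have hbase : (univ.filter fun h : H => (h, E j) ∈ V ∧ (E j, h) ∉ Sf r) = {G j} := by
      ext h
      simp only [Finset.mem_filter, Finset.mem_univ, true_and, Finset.mem_singleton]
      constructor
      · rintro ⟨hV', -⟩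
        exact (hVmemE j h).1 hV'
      · rintro rfl
        refine ⟨(hVmemE j _).2 rfl, ?_⟩
        rw [hSmem]
        rintro ⟨i, -, hd, -⟩
        exact hE j hd
    rw [hbase]
    exact topN_of_card_le (by simp)
  have hdPo : ∀ (S : Finset (D × H)) d, d ≠ d0 → (∀ j, d ≠ E j) → dProps M V S d = ∅ := by
    intro S d h1 h2
    unfold dProps
    have hbase : (univ.filter fun h : H => (h, d) ∈ V ∧ (d, h) ∉ S) = ∅ := by
      rw [Finset.filter_eq_empty_iff]
      intro h _
      rintro ⟨hmem, -⟩
      simp only [hVdef, Finset.mem_union, Finset.mem_image, Finset.mem_univ, true_and,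
        Prod.mk.injEq] at hmem
      rcases hmem with ⟨j, -, hd⟩ | ⟨j, -, hd⟩
      · exact h1 hd.symm
      · exact h2 j hd.symm
    rw [hbase, topN_empty]
  -- hKeeps along the cascade
  have hdProny : ∀ (r : ℕ) (hrk : r ≤ k) (d : D) (h : H), h ∈ dProps M V (Sf r) d →
      (d = d0 ∧ ∃ (hr : r < k), h = G ⟨r, hr⟩) ∨ (∃ j, d = E j ∧ h = G j) := by
    intro r hrk d h hmem
    rcases eq_or_ne d d0 with rfl | h1
    · rcases Nat.lt_or_ge r k with hr | hr
      · rw [hdP0lt r hr] at hmem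
        simp only [Finset.mem_singleton] at hmem
        exact Or.inl ⟨rfl, hr, hmem⟩
      · have : r = k := le_antisymm hrk hr
        subst this
        rw [hdP0k] at hmem
        simp at hmem
    by_cases h2 : ∃ j, d = E j
    · obtain ⟨j, rfl⟩ := h2
      rw [hdPE r j] at hmem
      simp only [Finset.mem_singleton] at hmem
      exact Or.inr ⟨j, rfl, hmem⟩
    · push_neg at h2
      rw [hdPo (Sf r) d h1 h2] at hmem
      simp at hmem
  have hhKG : ∀ (r : ℕ) (hrk : r ≤ k) (j : Fin k), hKeeps M V (Sf r) (G j) = {E j} := by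
    intro r hrk j
    unfold hKeeps
    refine topN_one_eq_singleton ?_ ?_
    · simp only [Finset.mem_filter, Finset.mem_univ, true_and]
      rw [hdPE r j]; simp
    · intro y hy hne
      simp only [Finset.mem_filter, Finset.mem_univ, true_and] at hy
      rcases hdProny r hrk y (G j) hy with ⟨rfl, -, -⟩ | ⟨j', rfl, hj'⟩
      · rw [hrG j, rank2_a, rank2_b _ (Ne.symm (hE j))]; omega
      · rw [← hGinj hj'] at hne
        exact absurd rfl hne
  have hhKo : ∀ (r : ℕ) (hrk : r ≤ k) (h : H), (∀ j, h ≠ G j) → hKeeps M V (Sf r) h = ∅ := by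
    intro r hrk h hh
    unfold hKeeps
    have hbase : (univ.filter fun d : D => h ∈ dProps M V (Sf r) d) = ∅ := by
      rw [Finset.filter_eq_empty_iff]
      intro d _ hmem
      rcases hdProny r hrk d h hmem with ⟨-, hr, hG⟩ | ⟨j, -, hG⟩
      · exact hh _ hG
      · exact hh _ hG
    rw [hbase, topN_empty]
  -- the cascade steps
  have hcas : ∀ r, r < k → mStep M V (Sf r) = Sf (r + 1) := by
    intro r hr
    unfold mStep
    ext ⟨d, h⟩
    simp only [Finset.mem_union, Finset.mem_filter, Finset.mem_univ, true_and]
    rw [hSmem, hSmem]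
    constructor
    · rintro (⟨i, hi, rfl, rfl⟩ | ⟨hmem, hnk⟩)
      · exact ⟨i, by omega, rfl, rfl⟩
      · rcases hdProny r (le_of_lt hr) d h hmem with ⟨rfl, hr', rfl⟩ | ⟨j, rfl, rfl⟩
        · exact ⟨⟨r, hr⟩, by simp, rfl, rfl⟩
        · rw [hhKG r (le_of_lt hr) j] at hnk
          simp at hnk
    · rintro ⟨i, hi, rfl, rfl⟩
      rcases Nat.lt_or_ge (i : ℕ) r with hir | hir
      · exact Or.inl ⟨i, hir, rfl, rfl⟩
      · have hieq : (i : ℕ) = r := by omega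
        have hieq' : i = (⟨r, hr⟩ : Fin k) := Fin.ext hieq
        refine Or.inr ⟨?_, ?_⟩
        · rw [hieq', hdP0lt r hr]; simp
        · rw [hhKG r (le_of_lt hr) i]
          simp only [Finset.mem_singleton]
          exact fun hc => hE i hc.symm
  have hcask : mStep M V (Sf k) = Sf k := by
    unfold mStep
    have hflt : (univ.filter fun p : D × H =>
        p.2 ∈ dProps M V (Sf k) p.1 ∧ p.1 ∉ hKeeps M V (Sf k) p.2) = ∅ := by
      rw [Finset.filter_eq_empty_iff]
      rintro ⟨d, h⟩ _
      rintro ⟨hmem, hnk⟩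
      rcases hdProny k le_rfl d h hmem with ⟨rfl, hr, -⟩ | ⟨j, rfl, rfl⟩
      · omega
      · rw [hhKG k le_rfl j] at hnk; simp at hnk
    rw [hflt]; simp
  have hkN : k ≤ Fintype.card D * Fintype.card H := by
    have h1 : k ≤ Fintype.card D := by
      simpa using Fintype.card_le_of_injective E hEinj
    have h2 : 0 < Fintype.card H := Fintype.card_pos_iff.2 ⟨h0⟩
    exact le_trans h1 (Nat.le_mul_of_pos_right _ h2)
  have hSf0 : Sf 0 = ∅ := by
    ext ⟨d, h⟩
    rw [hSmem]
    simp
  have hmRej : mRej M V = Sf k := by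
    unfold mRej
    rw [← hSf0]
    exact iterate_eq_of_chain _ Sf k _ hcas hcask hkN
  have hfin : ikMatching M ι κ = (univ : Finset (Fin k)).image fun j => (E j, G j) := by
    unfold ikMatching finalMatch
    rw [hV, hmRej]
    ext ⟨d, h⟩
    simp only [Finset.mem_filter, Finset.mem_univ, true_and, Finset.mem_image, Prod.mk.injEq]
    constructor
    · rintro ⟨hmem, -⟩
      rcases hdProny k le_rfl d h hmem with ⟨rfl, hr, -⟩ | ⟨j, rfl, rfl⟩
      · omega
      · exact ⟨j, rfl, rfl⟩
    · rintro ⟨j, rfl, rfl⟩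
      exact ⟨by rw [hdPE k j]; simp, by rw [hhKG k le_rfl j]; simp⟩
  intro had
  refine had d0 h0 ?_
  rw [hfin]
  refine ⟨?_, ?_, ?_, ?_, ?_⟩
  · rw [haccD]; exact Or.inl ⟨rfl, Fin.last k, rfl⟩
  · rw [haccH]; exact Or.inr ⟨rfl, rfl⟩
  · simp only [Finset.mem_image, Finset.mem_univ, true_and, Prod.mk.injEq, not_exists]
    rintro j ⟨hj, -⟩
    exact hE j hj
  · intro h' hh'
    simp only [Finset.mem_image, Finset.mem_univ, true_and, Prod.mk.injEq] at hh'
    obtain ⟨j, hj, -⟩ := hh'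
    exact absurd hj (hE j)
  · intro d' hd'
    simp only [Finset.mem_image, Finset.mem_univ, true_and, Prod.mk.injEq] at hd'
    obtain ⟨j, -, hj⟩ := hd'
    exact absurd hj (hGh0 j)
end MarketA
section Glue
variable {D H : Type*} [Fintype D] [Fintype H] [DecidableEq D] [DecidableEq H]

lemma exists_inj_avoid {α : Type*} [Fintype α] [DecidableEq α] (k : ℕ) (a : α)
    (hk : k + 1 ≤ Fintype.card α) :
    ∃ f : Fin k → α, Function.Injective f ∧ ∀ j, f j ≠ a := by
  have hcard : k ≤ (univ.erase a).card := by
    rw [Finset.card_erase_of_mem (Finset.mem_univ a), Finset.card_univ]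
    omega
  obtain ⟨T, hT1, hT2⟩ := Finset.exists_subset_card_eq hcard
  set g := Finset.equivFinOfCardEq hT2 with hg
  refine ⟨fun j => (g.symm j : α), ?_, ?_⟩
  · intro i j hij
    exact g.symm.injective (Subtype.coe_injective hij)
  · intro j
    have h1 : ((g.symm j : α)) ∈ T := (g.symm j).2
    exact (Finset.mem_erase.1 (hT1 h1)).1

lemma snoc_injective {n : ℕ} {α : Type*} (f : Fin n → α) (a : α)
    (hf : Function.Injective f) (ha : ∀ j, f j ≠ a) : Function.Injective (Fin.snoc f a) := by
  intro i j hij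
  rcases eq_or_ne i (Fin.last n) with rfl | hi
  · rcases eq_or_ne j (Fin.last n) with rfl | hj
    · rfl
    · obtain ⟨j', rfl⟩ := Fin.exists_castSucc_eq.2 hj
      rw [Fin.snoc_last, Fin.snoc_castSucc] at hij
      exact absurd hij.symm (ha j')
  · obtain ⟨i', rfl⟩ := Fin.exists_castSucc_eq.2 hi
    rcases eq_or_ne j (Fin.last n) with rfl | hj
    · rw [Fin.snoc_last, Fin.snoc_castSucc] at hij
      exact absurd hij (ha i')
    · obtain ⟨j', rfl⟩ := Fin.exists_castSucc_eq.2 hj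
      rw [Fin.snoc_castSucc, Fin.snoc_castSucc] at hij
      exact congrArg Fin.castSucc (hf hij)
end Glue

/-- If `(ι,κ)` is globally adequate, then no doctor has an intermediate
interview capacity `1 < κ_d < min {|D|, |H|}`, and no hospital has an intermediate
interview capacity `1 < ι_h < min {|D|, |H|}`. -/
theorem globally_adequate_no_intermediate_capacity
    (hD : 2 ≤ Fintype.card D) (hH : 2 ≤ Fintype.card H)
    (ι : H → ℕ) (κ : D → ℕ) (hga : GloballyAdequate D H ι κ) :
    (∀ d : D, ¬ (1 < κ d ∧ κ d < min (Fintype.card D) (Fintype.card H))) ∧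
    (∀ h : H, ¬ (1 < ι h ∧ ι h < min (Fintype.card D) (Fintype.card H))) := by
  have hDne : Nonempty D := Fintype.card_pos_iff.1 (by omega)
  have hHne : Nonempty H := Fintype.card_pos_iff.1 (by omega)
  have hι1 : ∀ h : H, 1 ≤ ι h := by
    intro h
    by_contra hc
    obtain ⟨d⟩ := hDne
    exact M0_not_adequate ι κ d h (Or.inl (by omega)) (hga _ (M0_strict d h))
  have hκ1 : ∀ d : D, 1 ≤ κ d := by
    intro d
    by_contra hc
    obtain ⟨h⟩ := hHne
    exact M0_not_adequate ι κ d h (Or.inr (by omega)) (hga _ (M0_strict d h))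
  have hDnt : Nontrivial D := Fintype.one_lt_card_iff_nontrivial.1 (by omega)
  have hHnt : Nontrivial H := Fintype.one_lt_card_iff_nontrivial.1 (by omega)
  constructor
  · intro d0 hcon
    obtain ⟨hk1, hkmin⟩ := hcon
    rw [lt_min_iff] at hkmin
    obtain ⟨hkD, hkH⟩ := hkmin
    by_cases hB : ∃ u v : H, u ≠ v ∧ ι u = 1 ∧ ι v = 1
    · obtain ⟨u, v, huv, hu, hv⟩ := hB
      obtain ⟨e, he⟩ := exists_ne d0
      exact MB_not_adequate ι κ d0 e u v he huv (by omega) hu (by omega)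
        (hga _ (MB_strict d0 e u v he huv))
    · have hgood : ∃ h0 : H, ∀ h : H, h ≠ h0 → 2 ≤ ι h := by
        by_cases hw : ∃ w : H, ι w = 1
        · obtain ⟨w, hwv⟩ := hw
          refine ⟨w, fun h hh => ?_⟩
          rcases Nat.lt_or_ge (ι h) 2 with h2 | h2
          · have hone : ι h = 1 := by have := hι1 h; omega
            exact absurd ⟨h, w, hh, hone, hwv⟩ hB
          · exact h2
        · push_neg at hw
          obtain ⟨h0⟩ := hHne
          refine ⟨h0, fun h _ => ?_⟩
          have := hι1 h
          have := hw h
          omega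
      obtain ⟨h0, hh0⟩ := hgood
      obtain ⟨G, hGinj, hGne⟩ := exists_inj_avoid (κ d0) h0
        (by omega : κ d0 + 1 ≤ Fintype.card H)
      obtain ⟨E, hEinj, hEne⟩ := exists_inj_avoid (κ d0) d0
        (by omega : κ d0 + 1 ≤ Fintype.card D)
      set G' : Fin (κ d0 + 1) → H := Fin.snoc G h0 with hG'
      have hG'inj : Function.Injective G' := snoc_injective G h0 hGinj hGne
      refine MA_not_adequate ι κ (κ d0) d0 G' E hG'inj hEinj hEne rfl ?_ ?_ (fun j => hκ1 _)
        (hga _ (MA_strict (κ d0) d0 G' E hG'inj hEne))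
      · intro j
        simp only [hG', Fin.snoc_castSucc]
        exact hh0 _ (hGne j)
      · simp only [hG', Fin.snoc_last]
        exact hι1 h0
  · intro h0 hcon
    obtain ⟨hk1, hkmin⟩ := hcon
    rw [lt_min_iff] at hkmin
    obtain ⟨hkD, hkH⟩ := hkmin
    by_cases hB : ∃ u v : D, u ≠ v ∧ κ u = 1 ∧ κ v = 1
    · obtain ⟨u, v, huv, hu, hv⟩ := hB
      obtain ⟨e', he'⟩ := exists_ne h0
      exact MBP_not_adequate ι κ h0 e' u v he' huv (by omega) hu (by omega) (hι1 e')
        (hga _ (MBP_strict h0 e' u v he' huv))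
    · have hgood : ∃ e : D, ∀ d : D, d ≠ e → 2 ≤ κ d := by
        by_cases hw : ∃ w : D, κ w = 1
        · obtain ⟨w, hwv⟩ := hw
          refine ⟨w, fun d hd => ?_⟩
          rcases Nat.lt_or_ge (κ d) 2 with h2 | h2
          · have hone : κ d = 1 := by have := hκ1 d; omega
            exact absurd ⟨d, w, hd, hone, hwv⟩ hB
          · exact h2
        · push_neg at hw
          obtain ⟨e⟩ := hDne
          refine ⟨e, fun d _ => ?_⟩
          have := hκ1 d
          have := hw d
          omega
      obtain ⟨e, hgood⟩ := hgood
      obtain ⟨E, hEinj, hEne⟩ := exists_inj_avoid (ι h0) e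
        (by omega : ι h0 + 1 ≤ Fintype.card D)
      obtain ⟨W, hWinj, hWne⟩ := exists_inj_avoid (ι h0) h0
        (by omega : ι h0 + 1 ≤ Fintype.card H)
      set E' : Fin (ι h0 + 1) → D := Fin.snoc E e with hE'
      have hE'inj : Function.Injective E' := snoc_injective E e hEinj hEne
      refine MAP_not_adequate ι κ (ι h0) h0 E' W hE'inj hWinj hWne rfl ?_ (fun j => hι1 _)
        (hga _ (MAP_strict (ι h0) h0 E' W hE'inj hWne))
      intro j
      simp only [hE', Fin.snoc_castSucc]
      exact hgood _ (hEne j)
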